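/- arXiv:2111.12716 — 9 statements merged into one kernel-verified Lean document; each statement's English description precedes it below -/
import Mathlib

section
/- Let n ≥ 1 be an integer, let u = [[α, β],[β̄, ᾱ]] ∈ SU(1,1), and let f : 𝔻 → ℂ be measurable. Then ∫_𝔻 (1−|z|²)^{2n−2} |(−β̄ z + α)^{−2n} f(u⁻¹·z)|² dA(z) = ∫_𝔻 (1−|z|²)^{2n−2} |f(z)|² dA(z) (both sides possibly infinite). That is, the discrete-series action (u·f)(z) = (−β̄ z + α)^{−2n} f(u⁻¹·z) preserves the weighted Bergman norm ‖f‖² = ∫_𝔻 (1−|z|²)^{2n−2}|f(z)|² dA(z). -/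
open MeasureTheory Complex
open scoped ENNReal

private lemma det_mul_complex (c : ℂ) :
    (((1 : ℂ →L[ℂ] ℂ).smulRight c).restrictScalars ℝ).det = Complex.normSq c := by
  have h : ((((1 : ℂ →L[ℂ] ℂ).smulRight c).restrictScalars ℝ : ℂ →L[ℝ] ℂ) : ℂ →ₗ[ℝ] ℂ)
      = Algebra.lmul ℝ ℂ c := by
    ext z; simp [mul_comm]
  rw [ContinuousLinearMap.det, h, ← Algebra.norm_apply, Algebra.norm_complex_apply]

private lemma pow_arith (D s : ℝ) (m : ℕ) :
    s ^ (2*m) * ((D ^ (2*m+2))⁻¹) ^ 2 = ((D^2)⁻¹)^2 * (s / D ^ 2) ^ (2*m) := by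
  rw [div_pow, inv_pow, inv_pow, ← pow_mul, ← pow_mul, ← pow_mul, div_eq_mul_inv,
    mul_comm, mul_left_comm, ← mul_inv, ← pow_add, mul_comm]
  congr 2
  ring

private lemma su_one_one (α β : ℂ) (hu : Complex.normSq α - Complex.normSq β = 1) :
    α * (starRingEnd ℂ) α - β * (starRingEnd ℂ) β = 1 := by
  have : ((Complex.normSq α - Complex.normSq β : ℝ) : ℂ) = 1 := by rw [hu]; norm_num
  rwa [Complex.ofReal_sub, ← Complex.mul_conj, ← Complex.mul_conj] at this

private lemma key_identity (α β : ℂ) (hu : Complex.normSq α - Complex.normSq β = 1) (z : ℂ) :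
    Complex.normSq (-(starRingEnd ℂ) β * z + α) - Complex.normSq ((starRingEnd ℂ) α * z - β)
      = 1 - Complex.normSq z := by
  have hαᾱ := su_one_one α β hu
  have e : ((-(starRingEnd ℂ) β * z + α) * (starRingEnd ℂ) (-(starRingEnd ℂ) β * z + α)
      - ((starRingEnd ℂ) α * z - β) * (starRingEnd ℂ) ((starRingEnd ℂ) α * z - β) : ℂ)
      = (α * (starRingEnd ℂ) α - β * (starRingEnd ℂ) β)
          * (1 - z * (starRingEnd ℂ) z) := by
    simp only [map_add, map_mul, map_sub, map_neg, Complex.conj_conj]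
    ring
  rw [hαᾱ, one_mul, Complex.mul_conj, Complex.mul_conj, Complex.mul_conj] at e
  exact_mod_cast congrArg Complex.re e

private lemma den_ne_zero (α β : ℂ) (hab : ‖β‖ < ‖α‖)
    {z : ℂ} (hz : ‖z‖ < 1) : -(starRingEnd ℂ) β * z + α ≠ 0 := by
  intro h0
  have hα : α = (starRingEnd ℂ) β * z := by linear_combination h0
  have h2 : ‖α‖ ≤ ‖β‖ := by
    rw [hα, norm_mul, Complex.norm_conj]
    calc ‖β‖ * ‖z‖ ≤ ‖β‖ * 1 :=
          mul_le_mul_of_nonneg_left hz.le (norm_nonneg _)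
      _ = ‖β‖ := mul_one _
  exact absurd hab (not_lt.mpr h2)

private lemma moebius_mem (α β : ℂ) (hu : Complex.normSq α - Complex.normSq β = 1)
    (hab : ‖β‖ < ‖α‖) {z : ℂ} (hz : ‖z‖ < 1) :
    ‖((starRingEnd ℂ) α * z - β) / (-(starRingEnd ℂ) β * z + α)‖ < 1 := by
  have hd := den_ne_zero α β hab hz
  have hnsz : Complex.normSq z < 1 := by
    rw [← Complex.sq_norm]; nlinarith [norm_nonneg z]
  have hdpos : 0 < Complex.normSq (-(starRingEnd ℂ) β * z + α) := Complex.normSq_pos.2 hd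
  have h1 : Complex.normSq (((starRingEnd ℂ) α * z - β) / (-(starRingEnd ℂ) β * z + α)) < 1 := by
    rw [Complex.normSq_div, div_lt_one hdpos]
    have := key_identity α β hu z; linarith
  rw [← Complex.sq_norm] at h1
  nlinarith [norm_nonneg (((starRingEnd ℂ) α * z - β) / (-(starRingEnd ℂ) β * z + α))]

private lemma moebius_left_inv (α β : ℂ) (hu : Complex.normSq α - Complex.normSq β = 1)
    (hab : ‖β‖ < ‖α‖) {z : ℂ} (hz : ‖z‖ < 1) :
    (α * (((starRingEnd ℂ) α * z - β) / (-(starRingEnd ℂ) β * z + α)) + β)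
      / ((starRingEnd ℂ) β * (((starRingEnd ℂ) α * z - β) / (-(starRingEnd ℂ) β * z + α))
          + (starRingEnd ℂ) α) = z := by
  have hαᾱ := su_one_one α β hu
  have hd := den_ne_zero α β hab hz
  have e1 : α * (((starRingEnd ℂ) α * z - β) / (-(starRingEnd ℂ) β * z + α)) + β
      = z / (-(starRingEnd ℂ) β * z + α) := by
    rw [mul_div_assoc', div_add' _ _ _ hd, div_eq_div_iff hd hd]
    linear_combination (-(starRingEnd ℂ) β * z + α) * z * hαᾱ
  have e2 : (starRingEnd ℂ) β * (((starRingEnd ℂ) α * z - β) / (-(starRingEnd ℂ) β * z + α))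
      + (starRingEnd ℂ) α = 1 / (-(starRingEnd ℂ) β * z + α) := by
    rw [mul_div_assoc', div_add' _ _ _ hd, div_eq_div_iff hd hd]
    linear_combination (-(starRingEnd ℂ) β * z + α) * hαᾱ
  rw [e1, e2]
  have hd' : -((starRingEnd ℂ) β * z) + α ≠ 0 := by rwa [neg_mul] at hd
  field_simp
  exact mul_div_cancel_right₀ z (by rwa [mul_comm] at hd')

/-- The discrete-series action of `u = [[α, β],[β̄, ᾱ]] ∈ SU(1,1)`,
`(u·f)(z) = (−β̄ z + α)^{−2n} f(u⁻¹·z)` with `u⁻¹·z = (ᾱz − β)/(−β̄z + α)`,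
preserves the weighted Bergman norm `‖f‖² = ∫_𝔻 (1−|z|²)^{2n−2}|f(z)|² dA(z)`
(both sides possibly infinite). -/
theorem discrete_series_action_preserves_norm (n : ℕ) (hn : 1 ≤ n) (α β : ℂ)
    (hu : Complex.normSq α - Complex.normSq β = 1) (f : ℂ → ℂ) (hf : Measurable f) :
    (∫⁻ z in Metric.ball (0 : ℂ) 1,
        ENNReal.ofReal ((1 - ‖z‖ ^ 2) ^ (2 * n - 2)) *
          (‖(-(starRingEnd ℂ) β * z + α) ^ (-(2 * n : ℤ)) *
              f (((starRingEnd ℂ) α * z - β) / (-(starRingEnd ℂ) β * z + α))‖₊ : ℝ≥0∞) ^ 2) =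
      ∫⁻ z in Metric.ball (0 : ℂ) 1,
        ENNReal.ofReal ((1 - ‖z‖ ^ 2) ^ (2 * n - 2)) * (‖f z‖₊ : ℝ≥0∞) ^ 2 := by
  classical
  obtain ⟨m, rfl⟩ : ∃ m, n = m + 1 := ⟨n - 1, by omega⟩
  have hαᾱ := su_one_one α β hu
  have hab : ‖β‖ < ‖α‖ := by
    have h1 : ‖β‖ ^ 2 < ‖α‖ ^ 2 := by
      rw [← Complex.sq_norm, ← Complex.sq_norm] at hu; nlinarith
    exact lt_of_pow_lt_pow_left₀ 2 (norm_nonneg _) h1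
  have hu' : Complex.normSq ((starRingEnd ℂ) α) - Complex.normSq (-β) = 1 := by simpa using hu
  have hab' : ‖-β‖ < ‖(starRingEnd ℂ) α‖ := by simpa using hab
  set den : ℂ → ℂ := fun z => -(starRingEnd ℂ) β * z + α with hden_def
  set g : ℂ → ℂ := fun z => ((starRingEnd ℂ) α * z - β) / den z with hg_def
  have hball : ∀ z : ℂ, z ∈ Metric.ball (0 : ℂ) 1 ↔ ‖z‖ < 1 := by
    intro z; simp [Metric.mem_ball, Complex.dist_eq]
  have hden : ∀ z : ℂ, ‖z‖ < 1 → den z ≠ 0 := fun z hz => den_ne_zero α β hab hz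
  have hmem : ∀ z : ℂ, ‖z‖ < 1 → ‖g z‖ < 1 :=
    fun z hz => moebius_mem α β hu hab hz
  set h : ℂ → ℂ := fun w => (α * w + β) / ((starRingEnd ℂ) β * w + (starRingEnd ℂ) α) with hh_def
  -- h is the g-map of the matrix (conj α, -β)
  have hh_eq : ∀ w : ℂ,
      h w = ((starRingEnd ℂ) ((starRingEnd ℂ) α) * w - (-β))
        / (-(starRingEnd ℂ) (-β) * w + (starRingEnd ℂ) α) := by
    intro w; rw [hh_def]; simp only [map_neg, Complex.conj_conj, neg_neg, sub_neg_eq_add]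
  have hmem2 : ∀ w : ℂ, ‖w‖ < 1 → ‖h w‖ < 1 := by
    intro w hw; rw [hh_eq]; exact moebius_mem ((starRingEnd ℂ) α) (-β) hu' hab' hw
  -- h ∘ g = id on the ball
  have hgh : ∀ z : ℂ, ‖z‖ < 1 → h (g z) = z := by
    intro z hz
    rw [hh_def]
    exact moebius_left_inv α β hu hab hz
  -- g ∘ h = id on the ball
  have hhg : ∀ w : ℂ, ‖w‖ < 1 → g (h w) = w := by
    intro w hw
    have := moebius_left_inv ((starRingEnd ℂ) α) (-β) hu' hab' hw
    rw [← hh_eq w] at this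
    simp only [map_neg, Complex.conj_conj, neg_neg] at this
    simp only [hg_def, hden_def]
    rw [sub_eq_add_neg]
    exact this
  -- injectivity
  have hinj : Set.InjOn g (Metric.ball (0 : ℂ) 1) := by
    intro z1 h1 z2 h2 e
    rw [hball] at h1 h2
    rw [← hgh z1 h1, ← hgh z2 h2, e]
  -- image
  have himage : g '' Metric.ball (0 : ℂ) 1 = Metric.ball (0 : ℂ) 1 := by
    apply Set.Subset.antisymm
    · rintro w ⟨z, hz, rfl⟩
      rw [hball] at hz ⊢
      exact hmem z hz
    · intro w hw
      rw [hball] at hw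
      exact ⟨h w, (hball _).2 (hmem2 w hw), hhg w hw⟩
  -- derivative
  set F' : ℂ → (ℂ →L[ℝ] ℂ) :=
    fun z => ((1 : ℂ →L[ℂ] ℂ).smulRight ((den z) ^ (-2 : ℤ))).restrictScalars ℝ with hF'_def
  have hderiv : ∀ z ∈ Metric.ball (0 : ℂ) 1,
      HasFDerivWithinAt g (F' z) (Metric.ball (0 : ℂ) 1) z := by
    intro z hz
    rw [hball] at hz
    have hd := hden z hz
    have h1 : HasDerivAt (fun z : ℂ => (starRingEnd ℂ) α * z - β) ((starRingEnd ℂ) α) z := by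
      simpa using ((hasDerivAt_id z).const_mul ((starRingEnd ℂ) α)).sub_const β
    have h2 : HasDerivAt den (-(starRingEnd ℂ) β) z := by
      rw [hden_def]
      simpa using ((hasDerivAt_id z).const_mul (-(starRingEnd ℂ) β)).add_const α
    have h3 := h1.div h2 hd
    have e : ((starRingEnd ℂ) α * den z - ((starRingEnd ℂ) α * z - β) * -(starRingEnd ℂ) β)
        / den z ^ 2 = (den z) ^ (-2 : ℤ) := by
      have hnum : (starRingEnd ℂ) α * den z - ((starRingEnd ℂ) α * z - β) * -(starRingEnd ℂ) β
          = 1 := by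
        rw [hden_def]; simp only; linear_combination hαᾱ
      rw [hnum, zpow_neg, zpow_two]
      rw [one_div, sq]
    rw [e] at h3
    have h4 : HasFDerivAt g (F' z) z := by
      rw [hF'_def]
      exact (h3.hasFDerivAt).restrictScalars ℝ
    exact h4.hasFDerivWithinAt
  -- change of variables
  have hcv := lintegral_image_eq_lintegral_abs_det_fderiv_mul volume
    measurableSet_ball hderiv hinj
    (fun w => ENNReal.ofReal ((1 - ‖w‖ ^ 2) ^ (2 * (m + 1) - 2)) *
      (‖f w‖₊ : ℝ≥0∞) ^ 2)
  rw [himage] at hcv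
  rw [hcv]
  -- pointwise identification of the integrands
  apply setLIntegral_congr_fun measurableSet_ball
  intro z hz
  beta_reduce
  rw [hball] at hz
  have fold1 : -(starRingEnd ℂ) β * z + α = den z := rfl
  rw [fold1]
  have fold2 : ((starRingEnd ℂ) α * z - β) / den z = g z := rfl
  rw [fold2]
  have hd := hden z hz
  have hD : ‖den z‖ ≠ 0 := by simpa using hd
  have hdet : (F' z).det = Complex.normSq ((den z) ^ (-2 : ℤ)) := det_mul_complex _
  -- norms
  have hnorm : ∀ a b : ℂ, ((‖a * b‖₊ : ℝ≥0∞)) ^ 2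
      = ENNReal.ofReal (‖a‖ ^ 2) * (‖b‖₊ : ℝ≥0∞) ^ 2 := by
    intro a b
    rw [nnnorm_mul, ENNReal.coe_mul, mul_pow]
    congr 1
    rw [← enorm_eq_nnnorm, ← ofReal_norm, ← ENNReal.ofReal_pow (norm_nonneg _)]
  rw [hnorm, hdet]
  have h1gz : 1 - ‖g z‖ ^ 2
      = (1 - ‖z‖ ^ 2) / ‖den z‖ ^ 2 := by
    have hk := key_identity α β hu z
    have hns : Complex.normSq (den z) ≠ 0 := (Complex.normSq_pos.2 hd).ne'
    rw [Complex.sq_norm, Complex.sq_norm, Complex.sq_norm, hg_def]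
    simp only [Complex.normSq_div]
    field_simp
    linear_combination hk
  have w1nn : (0:ℝ) ≤ (1 - ‖z‖ ^ 2) ^ (2 * (m + 1) - 2) :=
    pow_nonneg (by nlinarith [norm_nonneg z]) _
  rw [_root_.abs_of_nonneg (Complex.normSq_nonneg _)]
  rw [← mul_assoc, ← mul_assoc, ← ENNReal.ofReal_mul w1nn,
    ← ENNReal.ofReal_mul (Complex.normSq_nonneg _)]
  congr 2
  have e1 : ‖(den z) ^ (-(2 * ((m + 1 : ℕ) : ℤ)) : ℤ)‖
      = (‖den z‖ ^ (2 * m + 2))⁻¹ := by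
    rw [show (-(2 * ((m + 1 : ℕ) : ℤ)) : ℤ) = -((2 * m + 2 : ℕ) : ℤ) by push_cast; ring,
      zpow_neg, zpow_natCast, norm_inv, norm_pow]
  have e2 : Complex.normSq ((den z) ^ (-2 : ℤ)) = ((‖den z‖) ^ 2)⁻¹ ^ 2 := by
    rw [show (-2 : ℤ) = -((2 : ℕ) : ℤ) by norm_num, zpow_neg, zpow_natCast,
      Complex.normSq_eq_norm_sq, norm_inv, norm_pow]
  rw [e1, e2, h1gz, show 2 * (m + 1) - 2 = 2 * m from by omega]
  exact pow_arith _ _ m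
end

section
/- Let n ≥ 1 be an integer and let w₁, w₂ ∈ ℂ with |w₁| > 1 and |w₂| > 1. Then ((2n−1)/π) ∫_𝔻 (1−|z|²)^{2n−2} (conj(z) − conj(w₁))^{−2n} (z − w₂)^{−2n} dA(z) = (1 − conj(w₁)·w₂)^{−2n}. (Inner product of the coherent states 𝒪(w₁), 𝒪(w₂): (𝒪(w₁), 𝒪(w₂)) = (1 − w₁* w₂)^{−2n}.) -/
open MeasureTheory Complex Real Set

lemma angular_zero : (∫ θ in Set.Ioo (-π) (π:ℝ), (1:ℂ)) = ((2*π:ℝ):ℂ) := by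
  simp [Real.volume_Ioo, two_mul, ENNReal.toReal_ofReal (by positivity : (0:ℝ) ≤ π + π),
    real_smul, max_eq_left (by positivity : (0:ℝ) ≤ π + π)]

lemma angular (j : ℤ) (hj : j ≠ 0) :
    (∫ θ in Set.Ioo (-π) (π:ℝ), Complex.exp (j * θ * Complex.I)) = 0 := by
  have hπ := Real.pi_pos
  rw [← integral_Ioc_eq_integral_Ioo,
    ← intervalIntegral.integral_of_le (by linarith : (-π:ℝ) ≤ π)]
  have h : ∀ θ:ℝ, (j:ℂ) * θ * Complex.I = ((j:ℂ)*Complex.I) * θ := by intro θ; ring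
  simp_rw [h]
  have hc : (j:ℂ) * Complex.I ≠ 0 :=
    mul_ne_zero (Int.cast_ne_zero.mpr hj) Complex.I_ne_zero
  rw [integral_exp_mul_complex hc]
  have e1 : (j:ℂ) * Complex.I * (π:ℝ) = (j : ℤ) * ((π:ℝ) * Complex.I) := by push_cast; ring
  have e2 : (j:ℂ) * Complex.I * ((-π:ℝ):ℂ) = (-j : ℤ) * ((π:ℝ) * Complex.I) := by
    push_cast; ring
  rw [e1, e2, Complex.exp_int_mul, Complex.exp_int_mul, Complex.exp_pi_mul_I]
  have hsq : ((-1:ℂ))^j * ((-1:ℂ))^j = 1 := by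
    rw [← zpow_add₀ (by norm_num : (-1:ℂ) ≠ 0), show j+j = 2*j by ring, zpow_mul]
    norm_num
  have : ((-1:ℂ)) ^ (-j) = (-1:ℂ) ^ j := by
    rw [zpow_neg]
    exact (eq_inv_of_mul_eq_one_left hsq).symm
  rw [this, sub_self, zero_div]

lemma prod_fact (k : ℕ) : ∀ m : ℕ,
    (k.factorial : ℂ) * ∏ j ∈ Finset.range m, ((k:ℂ) + 1 + j) = ((k + m).factorial : ℂ)
  | 0 => by simp
  | (m+1) => by
    rw [Finset.prod_range_succ, ← mul_assoc, prod_fact k m,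
      show k + (m+1) = (k+m)+1 from rfl, Nat.factorial_succ]
    push_cast
    ring

lemma beta_nat (k d : ℕ) :
    (∫ x in (0:ℝ)..1, x^k * (1-x)^d) =
      (k.factorial * d.factorial : ℝ) / ((k+d+1).factorial) := by
  have hu : 0 < Complex.re ((k:ℂ)+1) := by simp; positivity
  have h := Complex.betaIntegral_eval_nat_add_one_right hu d
  rw [Complex.betaIntegral] at h
  have e : ∀ x : ℝ, (x:ℂ) ^ ((k:ℂ) + 1 - 1) * ((1:ℂ) - x) ^ ((d:ℂ) + 1 - 1)
      = ((x^k * (1-x)^d : ℝ) : ℂ) := by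
    intro x
    rw [add_sub_cancel_right, add_sub_cancel_right, Complex.cpow_natCast,
      Complex.cpow_natCast]
    push_cast
    ring
  simp_rw [e] at h
  rw [intervalIntegral.integral_ofReal] at h
  have hP : ((k.factorial : ℂ)) * ∏ j ∈ Finset.range (d+1), ((k:ℂ) + 1 + j)
      = ((k + (d+1)).factorial : ℂ) := prod_fact k (d+1)
  have h2 : ((∫ x in (0:ℝ)..1, x^k * (1-x)^d : ℝ) : ℂ)
      = ((k.factorial * d.factorial : ℝ) / ((k+d+1).factorial) : ℝ) := by
    rw [h]
    have hk0 : (k.factorial : ℂ) ≠ 0 := by exact_mod_cast k.factorial_ne_zero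
    have hkd0 : (((k+d+1).factorial : ℕ) : ℂ) ≠ 0 := by
      exact_mod_cast (k+d+1).factorial_ne_zero
    have hprod : (∏ j ∈ Finset.range (d+1), ((k:ℂ) + 1 + j)) ≠ 0 := by
      intro h0
      rw [h0, mul_zero] at hP
      exact hkd0 (by rw [show k+(d+1) = k+d+1 by omega] at hP; exact hP.symm)
    rw [show k+(d+1) = k+d+1 by omega] at hP
    push_cast
    rw [div_eq_div_iff hprod hkd0]
    push_cast at hP ⊢
    linear_combination (-(d.factorial : ℂ)) * hP
  exact_mod_cast h2

lemma radial (k d : ℕ) :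
    (∫ r in (0:ℝ)..1, r^(2*k+1) * (1-r^2)^d) =
      (k.factorial * d.factorial : ℝ) / (2 * (k+d+1).factorial) := by
  have h := intervalIntegral.integral_comp_mul_deriv
    (f := fun x:ℝ => x^2) (f' := fun x:ℝ => 2*x) (g := fun t:ℝ => t^k*(1-t)^d)
    (a := 0) (b := 1)
    (fun x _ => by simpa using hasDerivAt_pow 2 x)
    ((continuous_const.mul continuous_id).continuousOn) (by continuity)
  simp only [Function.comp] at h
  norm_num at h
  have e : ∀ x : ℝ, (x^2)^k * (1-x^2)^d * (2*x) = 2 * (x^(2*k+1) * (1-x^2)^d) := by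
    intro x
    rw [← pow_mul]
    ring
  simp_rw [e, intervalIntegral.integral_const_mul] at h
  rw [beta_nat k d] at h
  have h2 : ((k+d+1).factorial : ℝ) ≠ 0 := by exact_mod_cast (k+d+1).factorial_ne_zero
  field_simp at h ⊢
  linarith

lemma mono' (d k m : ℕ) :
    (∫ z in Metric.ball (0:ℂ) 1,
        ((1 - ‖z‖ ^ 2 : ℝ):ℂ)^d * ((starRingEnd ℂ) z) ^ k * z ^ m)
    = if k = m then ((π * (k.factorial * d.factorial) / (k+d+1).factorial : ℝ) : ℂ)
      else 0 := by
  have hπ := Real.pi_pos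
  set f : ℂ → ℂ :=
    fun z => ((1 - ‖z‖ ^ 2 : ℝ):ℂ)^d * ((starRingEnd ℂ) z) ^ k * z ^ m with hf
  set G : ℝ × ℝ → ℂ := fun p =>
    ((p.1^(k+m+1) * (1-p.1^2)^d : ℝ):ℂ) * Complex.exp (((m:ℤ) - (k:ℤ)) * p.2 * Complex.I)
    with hG
  have step1 : (∫ z in Metric.ball (0:ℂ) 1, f z)
      = ∫ p in Set.Ioo (0:ℝ) 1 ×ˢ Set.Ioo (-π) π, G p := by
    rw [← integral_indicator measurableSet_ball, ← Complex.integral_comp_polarCoord_symm,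
      _root_.polarCoord_target]
    have hsub : (Set.Ioo (0:ℝ) 1 ×ˢ Set.Ioo (-π) π) ⊆ (Set.Ioi (0:ℝ) ×ˢ Set.Ioo (-π) π) :=
      Set.prod_mono_left Set.Ioo_subset_Ioi_self
    rw [show (∫ p in Set.Ioo (0:ℝ) 1 ×ˢ Set.Ioo (-π) π, G p)
        = ∫ p in Set.Ioi (0:ℝ) ×ˢ Set.Ioo (-π) π,
            (Set.Ioo (0:ℝ) 1 ×ˢ Set.Ioo (-π) π).indicator G p by
      rw [setIntegral_indicator (measurableSet_Ioo.prod measurableSet_Ioo),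
        Set.inter_eq_self_of_subset_right hsub]]
    apply setIntegral_congr_fun ((measurableSet_Ioi).prod measurableSet_Ioo)
    rintro ⟨r, θ⟩ ⟨hr, hθ⟩
    simp only [Set.mem_Ioi] at hr
    replace hr : 0 < r := hr
    replace hθ : θ ∈ Set.Ioo (-π) π := hθ
    have hsymm : Complex.polarCoord.symm (r, θ) = (r:ℂ) * Complex.exp (θ * Complex.I) := by
      rw [Complex.polarCoord_symm_apply, Complex.exp_mul_I]
      norm_num
    have habs : ‖Complex.polarCoord.symm (r, θ)‖ = r := by
      rw [norm_polarCoord_symm, abs_of_pos hr]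
    by_cases hr1 : r < 1
    · have hmem : Complex.polarCoord.symm (r, θ) ∈ Metric.ball (0:ℂ) 1 := by
        simpa [Metric.mem_ball, Complex.dist_eq, abs_of_pos hr] using hr1
      have hmem2 : ((r,θ) : ℝ × ℝ) ∈ Set.Ioo (0:ℝ) 1 ×ˢ Set.Ioo (-π) π :=
        ⟨⟨hr, hr1⟩, hθ⟩
      dsimp only
      rw [Set.indicator_of_mem hmem, Set.indicator_of_mem hmem2]
      simp only [hf, hG, hsymm, habs]
      have hconj : (starRingEnd ℂ) ((r:ℂ) * Complex.exp (θ * Complex.I))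
          = (r:ℂ) * Complex.exp (-(θ * Complex.I)) := by
        rw [map_mul, Complex.conj_ofReal, ← Complex.exp_conj]
        congr 1
        simp [Complex.ext_iff]
      have habs2 : ‖(r:ℂ) * Complex.exp ((θ:ℝ) * Complex.I)‖ = r := by
        rw [← hsymm]; exact habs
      rw [hconj, habs2]
      rw [mul_pow, mul_pow, ← Complex.exp_nat_mul, ← Complex.exp_nat_mul, Complex.real_smul]
      have hexp : Complex.exp ((((m:ℤ):ℂ) - ((k:ℤ):ℂ)) * (θ:ℂ) * Complex.I)
          = Complex.exp ((k:ℂ) * -((θ:ℂ) * Complex.I)) *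
            Complex.exp ((m:ℂ) * ((θ:ℂ) * Complex.I)) := by
        rw [← Complex.exp_add]; congr 1; push_cast; ring
      rw [hexp]
      push_cast
      ring
    · have hmem : Complex.polarCoord.symm (r, θ) ∉ Metric.ball (0:ℂ) 1 := by
        simpa [Metric.mem_ball, Complex.dist_eq, abs_of_pos hr] using hr1
      have hmem2 : ((r,θ) : ℝ × ℝ) ∉ Set.Ioo (0:ℝ) 1 ×ˢ Set.Ioo (-π) π := by
        intro hc; exact hr1 hc.1.2
      dsimp only
      rw [Set.indicator_of_notMem hmem, Set.indicator_of_notMem hmem2, smul_zero]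
  rw [step1, hG]
  rw [Measure.volume_eq_prod, setIntegral_prod_mul
    (fun r => ((r^(k+m+1) * (1-r^2)^d : ℝ):ℂ))
    (fun θ : ℝ => Complex.exp ((((m:ℤ) - (k:ℤ)) : ℂ) * (θ:ℂ) * Complex.I))]
  have hrad : (∫ r in Set.Ioo (0:ℝ) 1, ((r^(k+m+1) * (1-r^2)^d : ℝ):ℂ))
      = ((∫ r in (0:ℝ)..1, r^(k+m+1) * (1-r^2)^d : ℝ) : ℂ) := by
    rw [← integral_Ioc_eq_integral_Ioo, ← intervalIntegral.integral_of_le (by norm_num : (0:ℝ) ≤ 1),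
      intervalIntegral.integral_ofReal]
  rw [hrad]
  by_cases hkm : k = m
  · subst hkm
    simp only [sub_self, Int.cast_zero, zero_mul, Complex.exp_zero, if_pos rfl]
    rw [angular_zero]
    rw [show k + k + 1 = 2*k+1 by ring, radial k d]
    rw [← Complex.ofReal_mul]
    congr 1
    field_simp
  · have hj : ((m:ℤ) - (k:ℤ)) ≠ 0 := by
      simp only [sub_ne_zero]
      exact_mod_cast fun h => hkm (by exact_mod_cast h.symm)
    have hang := angular ((m:ℤ) - (k:ℤ)) hj
    simp only [Int.cast_sub] at hang
    rw [hang, mul_zero, if_neg hkm]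

lemma hasSum_inv_pow (n : ℕ) (hn : 1 ≤ n) (u c : ℂ) (h : ‖c‖ < ‖u‖) :
    HasSum (fun k => (((k + (2*n-1)).choose (2*n-1) : ℕ):ℂ) * (u⁻¹)^(2*n) * (u⁻¹)^k * c^k)
      (((u - c)⁻¹)^(2*n)) := by
  have hupos : 0 < ‖u‖ := lt_of_le_of_lt (norm_nonneg c) h
  have hu0 : u ≠ 0 := by
    intro h0; rw [h0] at hupos; simp at hupos
  have hr : ‖c / u‖ < 1 := by
    rw [norm_div]
    exact (div_lt_one hupos).mpr h
  have H := hasSum_choose_mul_geometric_of_norm_lt_one (𝕜 := ℂ) (2*n-1) hr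
  rw [show 2*n-1+1 = 2*n by omega] at H
  have H2 := H.mul_left ((u⁻¹)^(2*n))
  have H3 : (fun k => (u⁻¹)^(2*n) *
        ((((k + (2*n-1)).choose (2*n-1):ℕ):ℂ) * (c/u)^k))
      = (fun k => (((k + (2*n-1)).choose (2*n-1) : ℕ):ℂ) * (u⁻¹)^(2*n) * (u⁻¹)^k * c^k) := by
    funext k
    rw [div_pow, div_eq_mul_inv, ← inv_pow]
    ring
  have hval : (u⁻¹)^(2*n) * (1/(1 - c/u)^(2*n)) = ((u - c)⁻¹)^(2*n) := by
    rw [one_div, ← inv_pow, ← mul_pow, ← mul_inv,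
      show u * (1 - c/u) = u - c by field_simp]
  rw [H3, hval] at H2
  exact H2

/-- Inner product of coherent states `𝒪(w₁), 𝒪(w₂)` in the discrete series model:
`((2n−1)/π) ∫_𝔻 (1−|z|²)^{2n−2} (z̄ − w̄₁)^{−2n} (z − w₂)^{−2n} dA(z) = (1 − w̄₁ w₂)^{−2n}`. -/
theorem coherent_state_inner_product (n : ℕ) (hn : 1 ≤ n) (w₁ w₂ : ℂ)
    (h₁ : 1 < ‖w₁‖) (h₂ : 1 < ‖w₂‖) :
    (((2 * (n : ℝ) - 1) / π : ℝ) : ℂ) *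
        ∫ z in Metric.ball (0 : ℂ) 1,
          ((1 - ‖z‖ ^ 2 : ℝ) : ℂ) ^ (2 * n - 2) *
            ((starRingEnd ℂ) z - (starRingEnd ℂ) w₁) ^ (-(2 * n : ℤ)) *
            (z - w₂) ^ (-(2 * n : ℤ)) =
      (1 - (starRingEnd ℂ) w₁ * w₂) ^ (-(2 * n : ℤ)) := by
  have hπ := Real.pi_pos
  set u := (starRingEnd ℂ) w₁ with hu_def
  have hu : 1 < ‖u‖ := by rwa [hu_def, Complex.norm_conj]
  have hu0 : u ≠ 0 := by
    intro h0; rw [h0] at hu; simp at hu; linarith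
  have hw0 : w₂ ≠ 0 := by
    intro h0; rw [h0] at h₂; simp at h₂; linarith
  set j := 2*n - 1 with hj_def
  have hj1 : j + 1 = 2*n := by omega
  have hd1 : (2*n - 2) + 1 = j := by omega
  -- zpow to pow helper
  have hzpow : ∀ x : ℂ, x ^ (-(2 * n : ℤ)) = (x⁻¹)^(2*n) := by
    intro x
    rw [show -(2*(n:ℤ)) = -((2*n : ℕ):ℤ) by push_cast; ring, zpow_neg, zpow_natCast, inv_pow]
  -- even trick
  have heven : ∀ x : ℂ, ((-x)⁻¹)^(2*n) = (x⁻¹)^(2*n) := by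
    intro x
    rw [inv_neg, Even.neg_pow (even_two_mul n)]
  set A : ℕ → ℂ := fun k => (((k + j).choose j : ℕ):ℂ) * (u⁻¹)^(2*n) * (u⁻¹)^k with hA_def
  set B : ℕ → ℂ := fun m => (((m + j).choose j : ℕ):ℂ) * (w₂⁻¹)^(2*n) * (w₂⁻¹)^m with hB_def
  set W : ℂ → ℂ := fun z => ((1 - ‖z‖ ^ 2 : ℝ) : ℂ) ^ (2 * n - 2) with hW_def
  set F : ℕ × ℕ → ℂ → ℂ :=
    fun p z => (A p.1 * B p.2) * (W z * ((starRingEnd ℂ) z) ^ p.1 * z ^ p.2) with hF_def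
  -- summability of coefficients
  have coefSummable : ∀ v : ℂ, 1 < ‖v‖ →
      Summable (fun k => ‖(((k + j).choose j : ℕ):ℂ) * (v⁻¹)^(2*n) * (v⁻¹)^k‖) := by
    intro v hv
    have hvn : ‖(v⁻¹ : ℂ)‖ < 1 := by
      rw [norm_inv]
      exact inv_lt_one_of_one_lt₀ hv
    have hs := (summable_choose_mul_geometric_of_norm_lt_one (R := ℝ) j
      (r := ‖(v⁻¹:ℂ)‖) (by rwa [Real.norm_eq_abs, _root_.abs_of_nonneg (norm_nonneg _)])).mul_left
      (‖(v⁻¹:ℂ)‖^(2*n))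
    apply hs.congr
    intro k
    simp [norm_mul, norm_pow]
    ring
  have sA : Summable (fun k => ‖A k‖) := coefSummable u hu
  have sB : Summable (fun k => ‖B k‖) := coefSummable w₂ h₂
  -- pointwise series expansion on the ball
  have key : ∀ z ∈ Metric.ball (0:ℂ) 1,
      W z * ((starRingEnd ℂ) z - u) ^ (-(2 * n : ℤ)) * (z - w₂) ^ (-(2 * n : ℤ))
        = ∑' p : ℕ × ℕ, F p z := by
    intro z hz
    have hzabs : ‖z‖ < 1 := by
      simpa [Metric.mem_ball, Complex.dist_eq] using hz
    have hA := hasSum_inv_pow n hn u ((starRingEnd ℂ) z)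
      (by rw [Complex.norm_conj]; linarith)
    have hB := hasSum_inv_pow n hn w₂ z (by linarith)
    rw [← hj_def] at hA hB
    have hA' : HasSum (fun k => A k * ((starRingEnd ℂ) z)^k)
        (((starRingEnd ℂ) z - u) ^ (-(2 * n : ℤ))) := by
      rw [hzpow, show ((starRingEnd ℂ) z - u) = -(u - (starRingEnd ℂ) z) by ring, heven]
      exact hA
    have hB' : HasSum (fun m => B m * z^m) ((z - w₂) ^ (-(2 * n : ℤ))) := by
      rw [hzpow, show (z - w₂) = -(w₂ - z) by ring, heven]
      exact hB
    have hsumm : Summable (fun p : ℕ × ℕ =>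
        (A p.1 * ((starRingEnd ℂ) z)^p.1) * (B p.2 * z^p.2)) := by
      apply summable_mul_of_summable_norm (f := fun k => A k * ((starRingEnd ℂ) z)^k)
        (g := fun m => B m * z^m)
      · apply Summable.of_nonneg_of_le (fun k => norm_nonneg _) ?_ sA
        intro k
        rw [norm_mul, norm_pow]
        have hle : ‖(starRingEnd ℂ) z‖ ≤ 1 := by
          rw [Complex.norm_conj]; exact hzabs.le
        calc ‖A k‖ * ‖(starRingEnd ℂ) z‖^k ≤ ‖A k‖ * 1 :=
              mul_le_mul_of_nonneg_left (pow_le_one₀ (norm_nonneg _) hle) (norm_nonneg _)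
          _ = ‖A k‖ := mul_one _
      · apply Summable.of_nonneg_of_le (fun k => norm_nonneg _) ?_ sB
        intro m
        rw [norm_mul, norm_pow]
        have hle : ‖z‖ ≤ 1 := by exact hzabs.le
        calc ‖B m‖ * ‖z‖^m ≤ ‖B m‖ * 1 :=
              mul_le_mul_of_nonneg_left (pow_le_one₀ (norm_nonneg _) hle) (norm_nonneg _)
          _ = ‖B m‖ := mul_one _
    have hprod := (hA'.mul hB' hsumm).mul_left (W z)
    rw [← mul_assoc] at hprod
    rw [hprod.tsum_eq.symm] at *
    · apply tsum_congr
      intro p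
      simp only [hF_def]
      ring
  -- setup q
  set q := u * w₂ with hq_def
  have hq : 1 < ‖q‖ := by
    rw [hq_def, norm_mul]
    nlinarith [norm_nonneg u]
  have hq0 : q ≠ 0 := mul_ne_zero hu0 hw0
  have hqinv : ‖(q⁻¹ : ℂ)‖ < 1 := by
    rw [norm_inv]
    exact inv_lt_one_of_one_lt₀ hq
  -- integrability
  have hIntW : IntegrableOn (fun z : ℂ => (1 - ‖z‖^2)^(2*n-2))
      (Metric.ball (0:ℂ) 1) := by
    have hc : Continuous (fun z : ℂ => (1 - ‖z‖^2)^(2*n-2)) := by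
      apply Continuous.pow
      exact continuous_const.sub (continuous_norm.pow 2)
    exact (hc.continuousOn.integrableOn_compact (isCompact_closedBall (0:ℂ) 1)).mono_set
      Metric.ball_subset_closedBall
  have hIntG : ∀ k m : ℕ, IntegrableOn
      (fun z:ℂ => W z * ((starRingEnd ℂ) z)^k * z^m) (Metric.ball (0:ℂ) 1) := by
    intro k m
    have hc : Continuous (fun z:ℂ => W z * ((starRingEnd ℂ) z)^k * z^m) := by
      apply Continuous.mul
      apply Continuous.mul
      · simp only [hW_def]
        exact (Complex.continuous_ofReal.comp
          (continuous_const.sub (continuous_norm.pow 2))).pow _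
      · exact (Complex.continuous_conj).pow _
      · exact continuous_id.pow _
    exact (hc.continuousOn.integrableOn_compact (isCompact_closedBall (0:ℂ) 1)).mono_set
      Metric.ball_subset_closedBall
  have hIntF : ∀ p : ℕ × ℕ, IntegrableOn (F p) (Metric.ball (0:ℂ) 1) := by
    intro p
    exact (hIntG p.1 p.2).const_mul _
  set Cw := ∫ z in Metric.ball (0:ℂ) 1, (1 - ‖z‖^2)^(2*n-2) with hCw
  have hFnorm : ∀ p : ℕ×ℕ, (∫ z in Metric.ball (0:ℂ) 1, ‖F p z‖)
      ≤ ‖A p.1‖ * ‖B p.2‖ * Cw := by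
    intro p
    have hptwise : ∀ z ∈ Metric.ball (0:ℂ) 1,
        ‖F p z‖ ≤ (‖A p.1‖ * ‖B p.2‖) * ((1 - ‖z‖^2)^(2*n-2)) := by
      intro z hz
      have hz1 : ‖z‖ < 1 := by
        simpa [Metric.mem_ball, Complex.dist_eq] using hz
      have h0 : (0:ℝ) ≤ 1 - ‖z‖^2 := by nlinarith [norm_nonneg z]
      have heq : ‖F p z‖ = ‖A p.1‖*‖B p.2‖*
          ((1 - ‖z‖^2)^(2*n-2) * ‖z‖^(p.1+p.2)) := by
        simp only [hF_def, hW_def, norm_mul, norm_pow,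
          Complex.norm_conj, Complex.norm_real, Real.norm_eq_abs]
        rw [_root_.abs_of_nonneg h0, pow_add]
        ring
      rw [heq]
      have hle1 : ‖z‖ ^ (p.1+p.2) ≤ 1 := pow_le_one₀ (norm_nonneg z) hz1.le
      have hAB : (0:ℝ) ≤ ‖A p.1‖ * ‖B p.2‖ :=
        mul_nonneg (norm_nonneg _) (norm_nonneg _)
      calc ‖A p.1‖*‖B p.2‖*((1 - ‖z‖^2)^(2*n-2) * ‖z‖^(p.1+p.2))
          ≤ ‖A p.1‖*‖B p.2‖*((1 - ‖z‖^2)^(2*n-2) * 1) := by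
            apply mul_le_mul_of_nonneg_left _ hAB
            exact mul_le_mul_of_nonneg_left hle1 (pow_nonneg h0 _)
        _ = (‖A p.1‖*‖B p.2‖)*((1 - ‖z‖^2)^(2*n-2)) := by ring
    have hmono := setIntegral_mono_on ((hIntF p).norm)
      (hIntW.const_mul (‖A p.1‖*‖B p.2‖)) measurableSet_ball hptwise
    rw [integral_const_mul] at hmono
    exact hmono
  have hSumInt : Summable (fun p : ℕ×ℕ => ∫ z in Metric.ball (0:ℂ) 1, ‖F p z‖) := by
    apply Summable.of_nonneg_of_le
      (fun p => integral_nonneg (fun z => norm_nonneg _)) hFnorm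
    exact (summable_mul_of_summable_norm (f := fun k => ‖A k‖) (g := fun m => ‖B m‖)
      (by simpa using sA) (by simpa using sB)).mul_right Cw
  have hswap := integral_tsum_of_summable_integral_norm
    (μ := volume.restrict (Metric.ball (0:ℂ) 1)) hIntF hSumInt
  rw [setIntegral_congr_fun measurableSet_ball key, ← hswap]
  -- compute each term
  have hterm : ∀ p : ℕ×ℕ, (∫ z in Metric.ball (0:ℂ) 1, F p z)
      = (A p.1 * B p.2) * (if p.1 = p.2 then
          ((π * (p.1.factorial * (2*n-2).factorial) / (p.1+(2*n-2)+1).factorial : ℝ) : ℂ)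
        else 0) := by
    intro p
    rw [show (∫ z in Metric.ball (0:ℂ) 1, F p z)
        = (A p.1 * B p.2) *
          ∫ z in Metric.ball (0:ℂ) 1, (W z * ((starRingEnd ℂ) z)^p.1 * z^p.2)
        from integral_const_mul _ _]
    congr 1
    exact mono' (2*n-2) p.1 p.2
  simp_rw [hterm]
  -- diagonal reduction
  have hinj : Function.Injective (fun k : ℕ => ((k,k) : ℕ×ℕ)) := by
    intro a b hab
    exact (Prod.mk.injEq _ _ _ _).mp hab |>.1
  have hsupp : Function.support (fun p : ℕ×ℕ => (A p.1 * B p.2) * (if p.1 = p.2 then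
          ((π * (p.1.factorial * (2*n-2).factorial) / (p.1+(2*n-2)+1).factorial : ℝ) : ℂ)
        else 0)) ⊆ Set.range (fun k : ℕ => ((k,k) : ℕ×ℕ)) := by
    intro p hp
    simp only [Function.mem_support] at hp
    by_cases hpe : p.1 = p.2
    · exact ⟨p.1, by rw [Prod.ext_iff]; exact ⟨rfl, hpe⟩⟩
    · exact absurd (by rw [if_neg hpe, mul_zero]) hp
  rw [← Function.Injective.tsum_eq hinj hsupp]
  dsimp only
  simp only [reduceIte]
  -- diagonal term value
  have hckC : ∀ k : ℕ, (((k+j).choose j : ℕ):ℂ) *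
      ((π * (k.factorial * (2*n-2).factorial) / (k+(2*n-2)+1).factorial : ℝ) : ℂ)
      = ((π/(2*(n:ℝ)-1) : ℝ):ℂ) := by
    intro k
    have h2 : (2*(n:ℝ)-1) ≠ 0 := by
      have : (1:ℝ) ≤ n := by exact_mod_cast hn
      nlinarith
    have hck : (((k+j).choose j : ℕ) : ℝ) *
        (π * (k.factorial * (2*n-2).factorial) / ((k+(2*n-2)+1).factorial))
        = π / (2*(n:ℝ)-1) := by
      have hidx : k + (2*n-2) + 1 = k + j := by omega
      have hnat : (k+j).choose j * k.factorial * j.factorial = (k+j).factorial :=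
        Nat.add_choose_mul_factorial_mul_factorial k j
      have hjf : (j.factorial : ℝ) = (2*(n:ℝ)-1) * ((2*n-2).factorial : ℝ) := by
        rw [show j = (2*n-2)+1 by omega, Nat.factorial_succ]
        push_cast [Nat.cast_sub (by omega : 2 ≤ 2*n)]
        ring
      rw [hidx]
      have h1 : ((k+j).factorial : ℝ) ≠ 0 :=
        Nat.cast_ne_zero.mpr (Nat.factorial_ne_zero _)
      have hnatR : (((k+j).choose j : ℕ):ℝ) * (k.factorial:ℝ) * (j.factorial:ℝ)
          = ((k+j).factorial : ℝ) := by exact_mod_cast hnat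
      rw [hjf] at hnatR
      field_simp
      linear_combination hnatR
    calc (((k+j).choose j : ℕ):ℂ) * ((π * (k.factorial * (2*n-2).factorial) /
            (k+(2*n-2)+1).factorial : ℝ) : ℂ)
        = ((((k+j).choose j : ℕ) : ℝ) *
            (π * (k.factorial * (2*n-2).factorial) / ((k+(2*n-2)+1).factorial)) : ℝ) := by
          push_cast; ring
      _ = ((π/(2*(n:ℝ)-1) : ℝ):ℂ) := by rw [hck]
  have hdterm : ∀ k : ℕ, A k * B k *
      ((π * (k.factorial * (2*n-2).factorial) / (k+(2*n-2)+1).factorial : ℝ) : ℂ)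
      = (((π/(2*(n:ℝ)-1) : ℝ):ℂ) * (q⁻¹)^(2*n)) *
        ((((k+j).choose j : ℕ):ℂ) * (q⁻¹)^k) := by
    intro k
    have hsplit : (q⁻¹ : ℂ) = u⁻¹ * w₂⁻¹ := by rw [hq_def, mul_inv]
    calc A k * B k * ((π * (k.factorial * (2*n-2).factorial) /
            (k+(2*n-2)+1).factorial : ℝ) : ℂ)
        = ((((k+j).choose j : ℕ):ℂ) * ((π * (k.factorial * (2*n-2).factorial) /
            (k+(2*n-2)+1).factorial : ℝ) : ℂ)) *
          ((((k+j).choose j : ℕ):ℂ) * ((u⁻¹*w₂⁻¹)^(2*n) * (u⁻¹*w₂⁻¹)^k)) := by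
          simp only [hA_def, hB_def, mul_pow]
          ring
      _ = _ := by rw [hckC k, hsplit]; ring
  simp_rw [hdterm]
  rw [tsum_mul_left, tsum_choose_mul_geometric_of_norm_lt_one j hqinv, hj1]
  -- final algebra
  have hq1 : (1 - q⁻¹ : ℂ) ≠ 0 := by
    intro h0
    have : (q⁻¹:ℂ) = 1 := by linear_combination -h0
    rw [this] at hqinv
    simp at hqinv
  have hfin : (q⁻¹:ℂ)^(2*n) * (1/(1-q⁻¹)^(2*n)) = ((1-q)⁻¹)^(2*n) := by
    rw [one_div, ← inv_pow, ← mul_pow, ← mul_inv,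
      show q * (1-q⁻¹) = -(1-q) by field_simp; ring]
    exact heven (1-q)
  rw [hzpow (1 - q)]
  rw [show (((π/(2*(n:ℝ)-1) : ℝ):ℂ) * (q⁻¹)^(2*n)) * (1/(1-q⁻¹)^(2*n))
      = ((π/(2*(n:ℝ)-1) : ℝ):ℂ) * ((q⁻¹)^(2*n) * (1/(1-q⁻¹)^(2*n))) by ring, hfin]
  rw [← mul_assoc, ← Complex.ofReal_mul]
  have : ((2 * (n:ℝ) - 1) / π) * (π/(2*(n:ℝ)-1)) = 1 := by
    have h2 : (2*(n:ℝ)-1) ≠ 0 := by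
      have : (1:ℝ) ≤ n := by exact_mod_cast hn
      nlinarith
    field_simp
  rw [this, Complex.ofReal_one, one_mul]
end

section
/- Let n ≥ 1 be an integer and let f : 𝔻 → ℂ be holomorphic with ∫_𝔻 (1−|z|²)^{2n−2} |f(z)|² dA(z) < ∞. If ∫_𝔻 (1−|z|²)^{2n−2} (conj(z) − conj(w))^{−2n} f(z) dA(z) = 0 for every w ∈ ℂ with |w| > 1, then f is identically zero. (Equivalently: the span of the coherent states (z−w)^{−2n}, |w| > 1, is dense in the weighted Bergman space.) -/
open MeasureTheory Complex Set Metric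
open scoped ENNReal Real NNReal

noncomputable def Complex.abs : AbsoluteValue ℂ ℝ := NormedField.toAbsoluteValue ℂ

lemma Complex.norm_eq_abs (z : ℂ) : ‖z‖ = Complex.abs z := rfl

lemma Complex.abs_conj (z : ℂ) : Complex.abs ((starRingEnd ℂ) z) = Complex.abs z := by
  rw [← Complex.norm_eq_abs, ← Complex.norm_eq_abs, Complex.norm_conj]

lemma Complex.continuous_abs : Continuous (fun z : ℂ => Complex.abs z) := continuous_norm

lemma abs_circleMap_zero (R θ : ℝ) : Complex.abs (circleMap 0 R θ) = |R| := by
  rw [← Complex.norm_eq_abs, norm_circleMap_zero]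

lemma ofReal_norm_eq_coe_nnnorm (a : ℂ) : ENNReal.ofReal ‖a‖ = (‖a‖₊ : ℝ≥0∞) := by
  rw [ofReal_norm]; rfl

noncomputable def csW (n : ℕ) (z : ℂ) : ℂ := ((1 - Complex.abs z ^ 2 : ℝ) : ℂ) ^ (2 * n - 2)

lemma csW_cont (n : ℕ) : Continuous (csW n) := by
  unfold csW
  exact (Complex.continuous_ofReal.comp (continuous_const.sub (Complex.continuous_abs.pow 2))).pow _

lemma csW_norm {n : ℕ} {z : ℂ} (hz : z ∈ ball (0:ℂ) 1) :
    ‖csW n z‖ = (1 - Complex.abs z ^ 2) ^ (2 * n - 2) := by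
  have h0 : (0:ℝ) ≤ 1 - Complex.abs z ^ 2 := by
    have : Complex.abs z < 1 := by exact mem_ball_zero_iff.mp hz
    nlinarith [Complex.abs.nonneg z]
  rw [csW, norm_pow, Complex.norm_real, Real.norm_eq_abs, _root_.abs_of_nonneg h0]

lemma csW_norm_le_one {n : ℕ} {z : ℂ} (hz : z ∈ ball (0:ℂ) 1) :
    ‖csW n z‖ ≤ 1 := by
  rw [csW_norm hz]
  have h1 : Complex.abs z < 1 := by exact mem_ball_zero_iff.mp hz
  have h0 : (0:ℝ) ≤ 1 - Complex.abs z ^ 2 := by nlinarith [Complex.abs.nonneg z]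
  have h2 : 1 - Complex.abs z ^ 2 ≤ 1 := by nlinarith [Complex.abs.nonneg z]
  exact pow_le_one₀ h0 h2

lemma integrable_Wf (n : ℕ) (f : ℂ → ℂ)
    (hf : DifferentiableOn ℂ f (Metric.ball (0 : ℂ) 1))
    (hL2 : (∫⁻ z in Metric.ball (0 : ℂ) 1,
        ENNReal.ofReal ((1 - Complex.abs z ^ 2) ^ (2 * n - 2)) * (‖f z‖₊ : ℝ≥0∞) ^ 2) < ⊤) :
    IntegrableOn (fun z => csW n z * f z) (ball (0:ℂ) 1) := by
  constructor
  · exact ((csW_cont n).continuousOn.mul hf.continuousOn).aestronglyMeasurable measurableSet_ball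
  · rw [hasFiniteIntegral_def]
    have hb : ∀ᵐ z ∂(volume.restrict (ball (0:ℂ) 1)),
        (‖csW n z * f z‖₊ : ℝ≥0∞) ≤ 1 +
          ENNReal.ofReal ((1 - Complex.abs z ^ 2) ^ (2 * n - 2)) * (‖f z‖₊ : ℝ≥0∞) ^ 2 := by
      rw [ae_restrict_iff' measurableSet_ball]
      filter_upwards with z hz
      have hW : (‖csW n z‖₊ : ℝ≥0∞) = ENNReal.ofReal ((1 - Complex.abs z ^ 2) ^ (2 * n - 2)) := by
        rw [← ofReal_norm_eq_coe_nnnorm, csW_norm hz]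
      have hW1 : (‖csW n z‖₊ : ℝ≥0∞) ≤ 1 := by
        rw [← ofReal_norm_eq_coe_nnnorm]
        exact ENNReal.ofReal_le_one.mpr (csW_norm_le_one hz)
      have key : (‖f z‖₊ : ℝ≥0∞) ≤ 1 + (‖f z‖₊ : ℝ≥0∞) ^ 2 := by
        rcases le_total (‖f z‖₊ : ℝ≥0∞) 1 with h | h
        · exact h.trans le_self_add
        · calc (‖f z‖₊ : ℝ≥0∞) = (‖f z‖₊ : ℝ≥0∞) * 1 := (mul_one _).symm
            _ ≤ (‖f z‖₊ : ℝ≥0∞) * (‖f z‖₊ : ℝ≥0∞) := by gcongr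
            _ = (‖f z‖₊ : ℝ≥0∞) ^ 2 := (sq _).symm
            _ ≤ 1 + _ := le_add_self
      calc (‖csW n z * f z‖₊ : ℝ≥0∞) = (‖csW n z‖₊ : ℝ≥0∞) * ‖f z‖₊ := by
            rw [nnnorm_mul]; push_cast; ring
        _ ≤ (‖csW n z‖₊ : ℝ≥0∞) * (1 + (‖f z‖₊ : ℝ≥0∞) ^ 2) := by gcongr
        _ = (‖csW n z‖₊ : ℝ≥0∞) * 1 + (‖csW n z‖₊ : ℝ≥0∞) * (‖f z‖₊ : ℝ≥0∞) ^ 2 := by ring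
        _ ≤ 1 + ENNReal.ofReal ((1 - Complex.abs z ^ 2) ^ (2 * n - 2)) * (‖f z‖₊ : ℝ≥0∞) ^ 2 := by
            rw [mul_one, hW]
            have h1 := csW_norm_le_one (n := n) hz
            rw [csW_norm hz] at h1
            gcongr
            exact ENNReal.ofReal_le_one.mpr h1
    calc ∫⁻ z in ball (0:ℂ) 1, (‖csW n z * f z‖₊ : ℝ≥0∞)
        ≤ ∫⁻ z in ball (0:ℂ) 1, (1 + ENNReal.ofReal ((1 - Complex.abs z ^ 2) ^ (2 * n - 2)) * (‖f z‖₊ : ℝ≥0∞) ^ 2) := lintegral_mono_ae hb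
      _ = (volume (ball (0:ℂ) 1)) + ∫⁻ z in ball (0:ℂ) 1, ENNReal.ofReal ((1 - Complex.abs z ^ 2) ^ (2 * n - 2)) * (‖f z‖₊ : ℝ≥0∞) ^ 2 := by
          rw [lintegral_add_left measurable_const]; simp
      _ < ⊤ := by
          refine ENNReal.add_lt_top.mpr ⟨?_, hL2⟩
          exact (measure_ball_lt_top)

lemma integrable_dom (n : ℕ) (f : ℂ → ℂ)
    (hf : DifferentiableOn ℂ f (Metric.ball (0 : ℂ) 1))
    (hL2 : (∫⁻ z in Metric.ball (0 : ℂ) 1,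
        ENNReal.ofReal ((1 - Complex.abs z ^ 2) ^ (2 * n - 2)) * (‖f z‖₊ : ℝ≥0∞) ^ 2) < ⊤)
    (g : ℂ → ℂ) (hg : AEStronglyMeasurable g (volume.restrict (ball (0:ℂ) 1)))
    (C : ℝ) (hC0 : 0 ≤ C)
    (hC : ∀ z ∈ ball (0:ℂ) 1, ‖g z‖ ≤ C * ‖csW n z * f z‖) :
    IntegrableOn g (ball (0:ℂ) 1) := by
  have hWf := integrable_Wf n f hf hL2
  refine Integrable.mono ((hWf.norm).const_mul C) hg ?_
  rw [ae_restrict_iff' measurableSet_ball]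
  filter_upwards with z hz
  have := hC z hz
  rw [Real.norm_eq_abs, _root_.abs_of_nonneg (by positivity)]
  exact this

lemma ball_ne (u z : ℂ) (hu : Complex.abs u < 1) (hz : z ∈ ball (0:ℂ) 1) :
    1 - (starRingEnd ℂ) z * u ≠ 0 := by
  have hz1 : Complex.abs z < 1 := by simpa [Complex.norm_eq_abs] using mem_ball_zero_iff.mp hz
  intro h
  have h1 : Complex.abs ((starRingEnd ℂ) z * u) = 1 := by
    have : (starRingEnd ℂ) z * u = 1 := by linear_combination -h
    rw [this]; simp
  rw [map_mul, Complex.abs_conj] at h1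
  nlinarith [Complex.abs.nonneg z, Complex.abs.nonneg u]

lemma abs_one_sub_ge (u z : ℂ) (hz : z ∈ ball (0:ℂ) 1) :
    1 - Complex.abs u ≤ Complex.abs (1 - (starRingEnd ℂ) z * u) := by
  have hz1 : Complex.abs z < 1 := by simpa [Complex.norm_eq_abs] using mem_ball_zero_iff.mp hz
  have h2 : Complex.abs ((starRingEnd ℂ) z * u) ≤ Complex.abs u := by
    rw [map_mul, Complex.abs_conj]
    nlinarith [Complex.abs.nonneg u, Complex.abs.nonneg z]
  calc 1 - Complex.abs u ≤ Complex.abs 1 - Complex.abs ((starRingEnd ℂ) z * u) := by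
        simp only [map_one]; linarith
    _ ≤ Complex.abs (1 - (starRingEnd ℂ) z * u) := by
        simpa [Complex.norm_eq_abs, Complex.abs_conj] using norm_sub_norm_le (1:ℂ) ((starRingEnd ℂ) z * u)

lemma zpow_neg_anti {a b : ℝ} (ha : 0 < a) (hab : a ≤ b) (m : ℕ) :
    b ^ (-(m:ℤ)) ≤ a ^ (-(m:ℤ)) := by
  rw [zpow_neg, zpow_neg, zpow_natCast, zpow_natCast]
  have h1 : (0:ℝ) < a ^ m := pow_pos ha m
  have h2 : a ^ m ≤ b ^ m := pow_le_pow_left₀ ha.le hab m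
  exact inv_anti₀ h1 h2

lemma contK (m : ℕ) (u : ℂ) (hu : Complex.abs u < 1) :
    ContinuousOn (fun z : ℂ => (1 - (starRingEnd ℂ) z * u) ^ (-(m:ℤ))) (ball (0:ℂ) 1) := by
  intro z hz
  exact (((continuous_const.sub ((Complex.continuous_conj).mul continuous_const)).continuousAt).zpow₀
    _ (Or.inl (ball_ne u z hu hz))).continuousWithinAt

noncomputable def csG (n : ℕ) (f : ℂ → ℂ) (j : ℕ) (u : ℂ) : ℂ :=
  ∫ z in ball (0:ℂ) 1,
    csW n z * ((starRingEnd ℂ) z) ^ j * (1 - (starRingEnd ℂ) z * u) ^ (-((2*n + j : ℕ) : ℤ)) * f z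

lemma aesm_integrand (n : ℕ) (f : ℂ → ℂ)
    (hf : DifferentiableOn ℂ f (Metric.ball (0 : ℂ) 1)) (j m : ℕ) (u : ℂ) (hu : Complex.abs u < 1) :
    AEStronglyMeasurable
      (fun z => csW n z * ((starRingEnd ℂ) z) ^ j * (1 - (starRingEnd ℂ) z * u) ^ (-(m : ℤ)) * f z)
      (volume.restrict (ball (0:ℂ) 1)) := by
  refine ContinuousOn.aestronglyMeasurable ?_ measurableSet_ball
  exact ((((csW_cont n).continuousOn.mul
      ((Complex.continuous_conj.pow j).continuousOn)).mul (contK m u hu)).mul hf.continuousOn)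

lemma norm_integrand_le (n : ℕ) (f : ℂ → ℂ) (j m : ℕ) (u z : ℂ) (hz : z ∈ ball (0:ℂ) 1)
    {ε : ℝ} (hε : 0 < ε) (hεle : ε ≤ Complex.abs (1 - (starRingEnd ℂ) z * u)) :
    ‖csW n z * ((starRingEnd ℂ) z) ^ j * (1 - (starRingEnd ℂ) z * u) ^ (-(m : ℤ)) * f z‖
      ≤ ε ^ (-(m:ℤ)) * ‖csW n z * f z‖ := by
  have hz1 : Complex.abs z < 1 := by simpa [Complex.norm_eq_abs] using mem_ball_zero_iff.mp hz
  have h1 : ‖((starRingEnd ℂ) z) ^ j‖ ≤ 1 := by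
    rw [norm_pow]
    apply pow_le_one₀ (norm_nonneg _)
    simpa [Complex.norm_eq_abs, Complex.abs_conj] using hz1.le
  have h2 : ‖(1 - (starRingEnd ℂ) z * u) ^ (-(m : ℤ))‖ ≤ ε ^ (-(m:ℤ)) := by
    rw [norm_zpow, Complex.norm_eq_abs]
    exact zpow_neg_anti hε hεle m
  calc ‖csW n z * ((starRingEnd ℂ) z) ^ j * (1 - (starRingEnd ℂ) z * u) ^ (-(m : ℤ)) * f z‖
      = (‖((starRingEnd ℂ) z) ^ j‖ * ‖(1 - (starRingEnd ℂ) z * u) ^ (-(m : ℤ))‖) * ‖csW n z * f z‖ := by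
        simp only [norm_mul]; ring
    _ ≤ (1 * ε ^ (-(m:ℤ))) * ‖csW n z * f z‖ := by
        have hε2 : (0:ℝ) ≤ ε ^ (-(m:ℤ)) := (zpow_pos hε _).le
        gcongr
    _ = ε ^ (-(m:ℤ)) * ‖csW n z * f z‖ := by ring

lemma csG_hasDerivAt (n : ℕ) (f : ℂ → ℂ)
    (hf : DifferentiableOn ℂ f (Metric.ball (0 : ℂ) 1))
    (hL2 : (∫⁻ z in Metric.ball (0 : ℂ) 1,
        ENNReal.ofReal ((1 - Complex.abs z ^ 2) ^ (2 * n - 2)) * (‖f z‖₊ : ℝ≥0∞) ^ 2) < ⊤)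
    (j : ℕ) {u₀ : ℂ} (hu₀ : u₀ ∈ ball (0:ℂ) 1) :
    HasDerivAt (csG n f j) (((2*n + j : ℕ) : ℂ) * csG n f (j+1) u₀) u₀ := by
  set m : ℕ := 2*n + j with hm
  have hu0 : Complex.abs u₀ < 1 := by simpa [Complex.norm_eq_abs] using mem_ball_zero_iff.mp hu₀
  set ε : ℝ := (1 - Complex.abs u₀)/2 with hεdef
  have hε0 : 0 < ε := by simp only [hεdef]; linarith
  -- u in ball u₀ ε has abs < 1 and kernel bounded below by ε
  have habs : ∀ u ∈ ball u₀ ε, Complex.abs u < 1 := by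
    intro u hu
    have : Complex.abs (u - u₀) < ε := by
      simpa [Complex.norm_eq_abs, Complex.dist_eq] using mem_ball.mp hu
    have h3 : Complex.abs u ≤ Complex.abs u₀ + Complex.abs (u - u₀) := by
      simpa using Complex.abs.add_le u₀ (u - u₀) |>.trans_eq' (by ring_nf)
    simp only [hεdef] at this ⊢
    linarith
  have hker : ∀ u ∈ ball u₀ ε, ∀ z ∈ ball (0:ℂ) 1,
      ε ≤ Complex.abs (1 - (starRingEnd ℂ) z * u) := by
    intro u hu z hz
    have h1 := abs_one_sub_ge u z hz
    have : Complex.abs (u - u₀) < ε := by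
      simpa [Complex.norm_eq_abs, Complex.dist_eq] using mem_ball.mp hu
    have h3 : Complex.abs u ≤ Complex.abs u₀ + Complex.abs (u - u₀) := by
      simpa using Complex.abs.add_le u₀ (u - u₀) |>.trans_eq' (by ring_nf)
    simp only [hεdef] at this h1 ⊢
    linarith
  -- the two integrand families
  set F : ℂ → ℂ → ℂ := fun u z =>
    csW n z * ((starRingEnd ℂ) z) ^ j * (1 - (starRingEnd ℂ) z * u) ^ (-(m : ℤ)) * f z with hF
  set F' : ℂ → ℂ → ℂ := fun u z =>
    (m:ℂ) * (csW n z * ((starRingEnd ℂ) z) ^ (j+1) *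
      (1 - (starRingEnd ℂ) z * u) ^ (-((m+1 : ℕ) : ℤ)) * f z) with hF'
  have key := hasDerivAt_integral_of_dominated_loc_of_deriv_le (μ := volume.restrict (ball (0:ℂ) 1))
      (F := F) (F' := F') (x₀ := u₀)
      (bound := fun z => (m:ℝ) * ε ^ (-((m+1:ℕ):ℤ)) * ‖csW n z * f z‖) (Metric.ball_mem_nhds u₀ hε0)
      ?_ ?_ ?_ ?_ ?_ ?_
  · -- conclude
    have h2 : (fun u => ∫ z in ball (0:ℂ) 1, F u z) = csG n f j := rfl
    have h3 : (∫ z in ball (0:ℂ) 1, F' u₀ z) = ((2*n + j : ℕ) : ℂ) * csG n f (j+1) u₀ := by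
      rw [hF']
      simp only []
      rw [integral_const_mul]
      rfl
    rw [h2, h3] at key
    exact key.2
  · -- hF_meas
    filter_upwards [Metric.ball_mem_nhds u₀ hε0] with u hu
    exact aesm_integrand n f hf j m u (habs u hu)
  · -- hF_int
    apply integrable_dom n f hf hL2 _ (aesm_integrand n f hf j m u₀ hu0) (ε ^ (-(m:ℤ)))
      (zpow_pos hε0 _).le
    intro z hz
    exact norm_integrand_le n f j m u₀ z hz hε0 (hker u₀ (mem_ball_self hε0) z hz)
  · -- hF'_meas
    have := (aesm_integrand n f hf (j+1) (m+1) u₀ hu0).const_mul (m:ℂ)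
    exact this
  · -- h_bound
    rw [ae_restrict_iff' measurableSet_ball]
    filter_upwards with z hz
    intro u hu
    have h1 := norm_integrand_le n f (j+1) (m+1) u z hz hε0 (hker u hu z hz)
    calc ‖F' u z‖ = (m:ℝ) * ‖csW n z * ((starRingEnd ℂ) z) ^ (j+1) *
          (1 - (starRingEnd ℂ) z * u) ^ (-((m+1 : ℕ) : ℤ)) * f z‖ := by
          rw [hF']; simp [norm_mul]
      _ ≤ (m:ℝ) * (ε ^ (-((m+1:ℕ):ℤ)) * ‖csW n z * f z‖) := by gcongr
      _ = (m:ℝ) * ε ^ (-((m+1:ℕ):ℤ)) * ‖csW n z * f z‖ := by ring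
  · -- bound integrable
    exact ((integrable_Wf n f hf hL2).norm.const_mul _)
  · -- h_diff
    rw [ae_restrict_iff' measurableSet_ball]
    filter_upwards with z hz
    intro u hu
    have hne : 1 - (starRingEnd ℂ) z * u ≠ 0 := ball_ne u z (habs u hu) hz
    have h1 : HasDerivAt (fun u : ℂ => 1 - (starRingEnd ℂ) z * u) (-((starRingEnd ℂ) z)) u := by
      simpa using ((hasDerivAt_id u).const_mul ((starRingEnd ℂ) z)).const_sub 1
    have h2 := (hasDerivAt_zpow (-(m:ℤ)) _ (Or.inl hne)).comp u h1
    have h3 := (h2.const_mul (csW n z * ((starRingEnd ℂ) z) ^ j)).mul_const (f z)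
    have h4 : HasDerivAt (fun v : ℂ => F v z)
        ((csW n z * ((starRingEnd ℂ) z) ^ j *
          (((-(m:ℤ) : ℤ) : ℂ) * (1 - (starRingEnd ℂ) z * u) ^ (-(m:ℤ) - 1) * -((starRingEnd ℂ) z))) * f z) u := h3
    refine h4.congr_deriv ?_
    rw [hF']
    have hexp : (-(m:ℤ) - 1) = (-((m+1:ℕ):ℤ)) := by push_cast; ring
    rw [hexp]
    push_cast
    ring

lemma csG_all_zero (n : ℕ) (hn : 1 ≤ n) (f : ℂ → ℂ)
    (hf : DifferentiableOn ℂ f (Metric.ball (0 : ℂ) 1))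
    (hL2 : (∫⁻ z in Metric.ball (0 : ℂ) 1,
        ENNReal.ofReal ((1 - Complex.abs z ^ 2) ^ (2 * n - 2)) * (‖f z‖₊ : ℝ≥0∞) ^ 2) < ⊤)
    (hG0 : ∀ u ∈ ball (0:ℂ) 1, u ≠ 0 → csG n f 0 u = 0) :
    ∀ j, ∀ u ∈ ball (0:ℂ) 1, csG n f j u = 0 := by
  intro j
  induction j with
  | zero =>
    intro u hu
    rcases eq_or_ne u 0 with rfl | hne
    · -- continuity at 0
      have hd := csG_hasDerivAt n f hf hL2 0 (mem_ball_self one_pos)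
      have hc : Filter.Tendsto (csG n f 0) (nhdsWithin (0:ℂ) {(0:ℂ)}ᶜ) (nhds (csG n f 0 0)) :=
        hd.continuousAt.continuousWithinAt
      have hev : csG n f 0 =ᶠ[nhdsWithin (0:ℂ) {(0:ℂ)}ᶜ] (fun _ => 0) := by
        filter_upwards [mem_nhdsWithin_of_mem_nhds (Metric.ball_mem_nhds (0:ℂ) one_pos),
          self_mem_nhdsWithin] with v h1 h2
        exact hG0 v h1 h2
      have hc2 : Filter.Tendsto (csG n f 0) (nhdsWithin (0:ℂ) {(0:ℂ)}ᶜ) (nhds 0) :=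
        (Filter.tendsto_congr' hev).mpr tendsto_const_nhds
      exact tendsto_nhds_unique hc hc2
    · exact hG0 u hu hne
  | succ j ih =>
    intro u₀ hu₀
    have hd := csG_hasDerivAt n f hf hL2 j hu₀
    have hev : (fun _ : ℂ => (0:ℂ)) =ᶠ[nhds u₀] csG n f j := by
      filter_upwards [Metric.isOpen_ball.mem_nhds hu₀] with v hv
      exact (ih v hv).symm
    have hd2 : HasDerivAt (fun _ : ℂ => (0:ℂ)) (((2*n + j : ℕ) : ℂ) * csG n f (j+1) u₀) u₀ :=
      hd.congr_of_eventuallyEq hev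
    have h0 : HasDerivAt (fun _ : ℂ => (0:ℂ)) 0 u₀ := hasDerivAt_const u₀ 0
    have := hd2.unique h0
    have hcast : ((2*n + j : ℕ) : ℂ) ≠ 0 := Nat.cast_ne_zero.mpr (by omega)
    exact (mul_eq_zero.mp this).resolve_left hcast

lemma moments_zero (n : ℕ) (hn : 1 ≤ n) (f : ℂ → ℂ)
    (hf : DifferentiableOn ℂ f (Metric.ball (0 : ℂ) 1))
    (hL2 : (∫⁻ z in Metric.ball (0 : ℂ) 1,
        ENNReal.ofReal ((1 - Complex.abs z ^ 2) ^ (2 * n - 2)) * (‖f z‖₊ : ℝ≥0∞) ^ 2) < ⊤)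
    (hG0 : ∀ u ∈ ball (0:ℂ) 1, u ≠ 0 → csG n f 0 u = 0) :
    ∀ j, (∫ z in ball (0:ℂ) 1, csW n z * ((starRingEnd ℂ) z) ^ j * f z) = 0 := by
  intro j
  have h := csG_all_zero n hn f hf hL2 hG0 j 0 (mem_ball_self one_pos)
  rw [csG] at h
  refine Eq.trans ?_ h
  apply setIntegral_congr_fun measurableSet_ball
  intro z hz
  simp

lemma integrableOn_polar_real {E : Type*} [NormedAddCommGroup E] [NormedSpace ℝ E]
    (g : ℝ × ℝ → E) (hg : Integrable g) :
    IntegrableOn (fun p : ℝ × ℝ => p.1 • g (polarCoord.symm p)) polarCoord.target := by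
  set B : ℝ × ℝ → ℝ × ℝ →L[ℝ] ℝ × ℝ := fun p =>
    LinearMap.toContinuousLinearMap (Matrix.toLin (Module.Basis.finTwoProd ℝ) (Module.Basis.finTwoProd ℝ)
      !![Real.cos p.2, -p.1 * Real.sin p.2; Real.sin p.2, p.1 * Real.cos p.2]) with hB
  have A : ∀ p ∈ polarCoord.target, HasFDerivWithinAt polarCoord.symm (B p) polarCoord.target p :=
    fun p _ => (hasFDerivAt_polarCoord_symm p).hasFDerivWithinAt
  have B_det : ∀ p, (B p).det = p.1 := by
    intro p
    conv_rhs => rw [← one_mul p.1, ← Real.cos_sq_add_sin_sq p.2]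
    simp only [hB, neg_mul, LinearMap.det_toContinuousLinearMap, LinearMap.det_toLin,
      Matrix.det_fin_two_of, sub_neg_eq_add]
    ring
  have h2 := (integrableOn_image_iff_integrableOn_abs_det_fderiv_smul volume
      polarCoord.open_target.measurableSet A
      (polarCoord.symm.injOn) g).mp (by
        rw [polarCoord.symm_image_target_eq_source]
        exact hg.integrableOn)
  refine h2.congr_fun ?_ polarCoord.open_target.measurableSet
  intro p hp
  simp only [B_det, abs_of_pos (show (0:ℝ) < p.1 from hp.1)]

lemma integrableOn_polar {E : Type*} [NormedAddCommGroup E] [NormedSpace ℝ E]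
    (g : ℂ → E) (hg : Integrable g) :
    IntegrableOn (fun p : ℝ × ℝ => p.1 • g (Complex.polarCoord.symm p)) polarCoord.target := by
  have hg2 : Integrable (g ∘ Complex.measurableEquivRealProd.symm) :=
    (Complex.volume_preserving_equiv_real_prod.symm).integrable_comp_emb
      Complex.measurableEquivRealProd.symm.measurableEmbedding |>.mpr hg
  have := integrableOn_polar_real (g ∘ Complex.measurableEquivRealProd.symm) hg2
  exact this

noncomputable def csA (f : ℂ → ℂ) (j : ℕ) : ℂ := (cauchyPowerSeries f 0 (1/2 : ℝ)).coeff j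

lemma cauchy_coeff_eq_csA (f : ℂ → ℂ) (hf : DifferentiableOn ℂ f (ball (0:ℂ) 1)) (j : ℕ)
    {r : ℝ} (hr0 : 0 < r) (hr1 : r < 1) :
    (cauchyPowerSeries f 0 r).coeff j = csA f j := by
  have hb : ∀ s : ℝ, 0 < s → s < 1 →
      HasFPowerSeriesAt f (cauchyPowerSeries f 0 s) 0 := by
    intro s hs0 hs1
    have h := DifferentiableOn.hasFPowerSeriesOnBall (f := f) (c := 0) (R := s.toNNReal)
      (by rw [Real.coe_toNNReal _ hs0.le]; exact hf.mono (closedBall_subset_ball hs1))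
      (Real.toNNReal_pos.mpr hs0)
    rw [Real.coe_toNNReal _ hs0.le] at h
    exact h.hasFPowerSeriesAt
  have h1 := hb r hr0 hr1
  have h2 := hb (1/2 : ℝ) (by norm_num) (by norm_num)
  rw [h1.eq_formalMultilinearSeries h2, csA]

lemma theta_integral (f : ℂ → ℂ) (hf : DifferentiableOn ℂ f (ball (0:ℂ) 1)) (j : ℕ)
    {r : ℝ} (hr0 : 0 < r) (hr1 : r < 1) :
    (∫ θ in (0:ℝ)..(2*π), Complex.exp (-(j:ℂ) * θ * Complex.I) * f (circleMap 0 r θ))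
      = ((2*π : ℝ) : ℂ) * (r:ℂ)^j * csA f j := by
  have hr0' : (r:ℂ) ≠ 0 := by exact_mod_cast hr0.ne'
  have happ := cauchyPowerSeries_apply f 0 r j 1
  have hcoeff : (cauchyPowerSeries f 0 r).coeff j = csA f j := cauchy_coeff_eq_csA f hf j hr0 hr1
  rw [show (cauchyPowerSeries f 0 r j fun _ => (1:ℂ)) = (cauchyPowerSeries f 0 r).coeff j from rfl,
    hcoeff] at happ
  rw [circleIntegral] at happ
  have hptw : ∀ θ : ℝ, (deriv (circleMap 0 r) θ) •
      (((1:ℂ) / (circleMap 0 r θ - 0)) ^ j • ((circleMap 0 r θ - 0)⁻¹ • f (circleMap 0 r θ)))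
      = (Complex.I * ((r:ℂ)⁻¹)^j) * (Complex.exp (-(j:ℂ) * θ * Complex.I) * f (circleMap 0 r θ)) := by
    intro θ
    have hcm : circleMap 0 r θ = (r:ℂ) * Complex.exp (θ * Complex.I) := circleMap_zero r θ
    have hcne : circleMap 0 r θ ≠ 0 := circleMap_ne_center hr0.ne'
    have hexpne : Complex.exp (θ * Complex.I) ≠ 0 := Complex.exp_ne_zero _
    rw [deriv_circleMap, smul_eq_mul, smul_eq_mul, smul_eq_mul, sub_zero]
    rw [hcm]
    have hpow : ((1:ℂ) / ((r:ℂ) * Complex.exp (θ * Complex.I))) ^ j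
        = ((r:ℂ)⁻¹)^j * Complex.exp (-(j:ℂ) * θ * Complex.I) := by
      rw [one_div, mul_inv, ← Complex.exp_neg, mul_pow, ← Complex.exp_nat_mul]
      ring_nf
    rw [hpow]
    field_simp
  rw [intervalIntegral.integral_congr (fun θ _ => hptw θ)] at happ
  rw [intervalIntegral.integral_const_mul] at happ
  have hπ : ((π:ℝ):ℂ) ≠ 0 := by exact_mod_cast Real.pi_ne_zero
  have hI := Complex.I_ne_zero
  -- happ : csA f j = (2 * π * I)⁻¹ • (I * r⁻¹^j * ∫ ...)
  rw [smul_eq_mul] at happ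
  have hπ : ((π:ℝ):ℂ) ≠ 0 := by exact_mod_cast Real.pi_ne_zero
  set J := (∫ θ in (0:ℝ)..(2*π), Complex.exp (-(j:ℂ) * θ * Complex.I) * f (circleMap 0 r θ)) with hJ
  set a : ℂ := 2 * (π:ℝ) * Complex.I with ha
  set b : ℂ := Complex.I * ((r:ℂ)⁻¹)^j with hbdef
  have hane : a ≠ 0 := mul_ne_zero (mul_ne_zero two_ne_zero hπ) Complex.I_ne_zero
  have hbne : b ≠ 0 := mul_ne_zero Complex.I_ne_zero (pow_ne_zero _ (inv_ne_zero hr0'))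
  have hab : a * csA f j = b * J := by
    rw [happ, ← mul_assoc, mul_inv_cancel₀ hane, one_mul]
  have h2 : J = a * b⁻¹ * csA f j := by
    calc J = b⁻¹ * (b * J) := by rw [← mul_assoc, inv_mul_cancel₀ hbne, one_mul]
      _ = b⁻¹ * (a * csA f j) := by rw [hab]
      _ = a * b⁻¹ * csA f j := by ring
  have hconst : a * b⁻¹ = ((2*π : ℝ):ℂ) * (r:ℂ)^j := by
    rw [hbdef, mul_inv, Complex.inv_I, inv_pow, inv_inv, ha]
    push_cast
    linear_combination ((-2:ℂ)*(π:ℂ)*(r:ℂ)^j) * Complex.I_sq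
  rw [h2, hconst]

lemma polar_symm_eq_circleMap {r : ℝ} (θ : ℝ) :
    Complex.polarCoord.symm (r, θ) = circleMap 0 r θ := by
  rw [Complex.polarCoord_symm_apply, circleMap_zero, Complex.exp_mul_I,
    ← Complex.ofReal_cos, ← Complex.ofReal_sin]

lemma inner_theta (n : ℕ) (f : ℂ → ℂ) (hf : DifferentiableOn ℂ f (ball (0:ℂ) 1)) (j : ℕ)
    {r : ℝ} (hr0 : 0 < r) (hr1 : r < 1) :
    (∫ θ in Set.Ioo (-π) π, (r : ℝ) • (Set.indicator (ball (0:ℂ) 1)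
        (fun z => csW n z * ((starRingEnd ℂ) z) ^ j * f z) (Complex.polarCoord.symm (r, θ))))
      = ((2*π*r^(2*j+1)*(1-r^2)^(2*n-2) : ℝ) : ℂ) * csA f j := by
  have hle : -π ≤ π := by linarith [Real.pi_pos]
  have hmem : ∀ θ : ℝ, circleMap 0 r θ ∈ ball (0:ℂ) 1 := by
    intro θ
    rw [mem_ball_zero_iff]
    simp only [Complex.norm_eq_abs, abs_circleMap_zero]
    rwa [_root_.abs_of_pos hr0]
  have habs : ∀ θ : ℝ, Complex.abs (circleMap 0 r θ) = r := by
    intro θ; rw [abs_circleMap_zero, _root_.abs_of_pos hr0]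
  have hconj : ∀ θ : ℝ, ((starRingEnd ℂ) (circleMap 0 r θ)) ^ j
      = (r:ℂ)^j * Complex.exp (-(j:ℂ) * θ * Complex.I) := by
    intro θ
    rw [circleMap_zero, map_mul, Complex.conj_ofReal, ← Complex.exp_conj, map_mul,
      Complex.conj_ofReal, Complex.conj_I, mul_pow, ← Complex.exp_nat_mul,
      show ((j:ℂ) * ((θ:ℂ) * -Complex.I)) = -(j:ℂ)*θ*Complex.I by ring]
  set C : ℂ := (r:ℂ) * ((1 - r^2 : ℝ):ℂ)^(2*n-2) * (r:ℂ)^j with hC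
  set φ : ℝ → ℂ := fun θ => Complex.exp (-(j:ℂ)*θ*Complex.I) * f (circleMap 0 r θ) with hφ
  have hptw : ∀ θ : ℝ, (r : ℝ) • (Set.indicator (ball (0:ℂ) 1)
        (fun z => csW n z * ((starRingEnd ℂ) z) ^ j * f z) (Complex.polarCoord.symm (r, θ)))
      = C * φ θ := by
    intro θ
    rw [polar_symm_eq_circleMap, Set.indicator_of_mem (hmem θ), Complex.real_smul]
    simp only [csW, habs θ, hconj θ, hC, hφ]
    ring
  have hper : Function.Periodic (fun θ => C * φ θ) (2*π) := by
    intro θ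
    simp only [hφ]
    rw [periodic_circleMap 0 r θ]
    congr 2
    push_cast
    have hone : Complex.exp ((-(j:ℂ)) * (2*(π:ℂ)*Complex.I)) = 1 := by
      have h := Complex.exp_int_mul_two_pi_mul_I (-(j:ℤ))
      push_cast at h
      exact h
    rw [show (-(j:ℂ) * ((θ:ℂ) + 2*(π:ℂ)) * Complex.I)
        = -(j:ℂ)*θ*Complex.I + (-(j:ℂ)) * (2*(π:ℂ)*Complex.I) by push_cast; ring,
      Complex.exp_add, hone, mul_one]
  calc (∫ θ in Set.Ioo (-π) π, (r : ℝ) • (Set.indicator (ball (0:ℂ) 1)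
        (fun z => csW n z * ((starRingEnd ℂ) z) ^ j * f z) (Complex.polarCoord.symm (r, θ))))
      = ∫ θ in Set.Ioo (-π) π, C * φ θ :=
        setIntegral_congr_fun measurableSet_Ioo (fun θ _ => hptw θ)
    _ = ∫ θ in (-π)..π, C * φ θ := by
        rw [intervalIntegral.integral_of_le hle, integral_Ioc_eq_integral_Ioo]
    _ = ∫ θ in (0:ℝ)..(2*π), C * φ θ := by
        have h := hper.intervalIntegral_add_eq (-π) 0
        rw [show -π + 2*π = π by ring, zero_add] at h
        exact h
    _ = C * ∫ θ in (0:ℝ)..(2*π), φ θ := intervalIntegral.integral_const_mul _ _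
    _ = C * (((2*π : ℝ) : ℂ) * (r:ℂ)^j * csA f j) := by
        rw [hφ]
        rw [theta_integral f hf j hr0 hr1]
    _ = ((2*π*r^(2*j+1)*(1-r^2)^(2*n-2) : ℝ) : ℂ) * csA f j := by
        rw [hC]
        push_cast
        ring

lemma csA_zero (n : ℕ) (hn : 1 ≤ n) (f : ℂ → ℂ)
    (hf : DifferentiableOn ℂ f (Metric.ball (0 : ℂ) 1))
    (hL2 : (∫⁻ z in Metric.ball (0 : ℂ) 1,
        ENNReal.ofReal ((1 - Complex.abs z ^ 2) ^ (2 * n - 2)) * (‖f z‖₊ : ℝ≥0∞) ^ 2) < ⊤)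
    (hmom : ∀ j, (∫ z in ball (0:ℂ) 1, csW n z * ((starRingEnd ℂ) z) ^ j * f z) = 0) :
    ∀ j, csA f j = 0 := by
  intro j
  set F : ℂ → ℂ := fun z => csW n z * ((starRingEnd ℂ) z) ^ j * f z with hFdef
  set g : ℂ → ℂ := (ball (0:ℂ) 1).indicator F with hgdef
  have hFi : IntegrableOn F (ball (0:ℂ) 1) := by
    apply integrable_dom n f hf hL2 F ?_ 1 zero_le_one ?_
    · exact ContinuousOn.aestronglyMeasurable
        (((csW_cont n).continuousOn.mul ((Complex.continuous_conj.pow j).continuousOn)).mul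
          hf.continuousOn) measurableSet_ball
    · intro z hz
      have hz1 : Complex.abs z < 1 := by
        simpa [Complex.norm_eq_abs] using mem_ball_zero_iff.mp hz
      have h1 : ‖((starRingEnd ℂ) z) ^ j‖ ≤ 1 := by
        rw [norm_pow]
        apply pow_le_one₀ (norm_nonneg _)
        simpa [Complex.norm_eq_abs, Complex.abs_conj] using hz1.le
      calc ‖F z‖ = ‖((starRingEnd ℂ) z) ^ j‖ * ‖csW n z * f z‖ := by
            rw [hFdef]; simp only [norm_mul]; ring
        _ ≤ 1 * ‖csW n z * f z‖ := by gcongr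
  have hgi : Integrable g := (integrable_indicator_iff measurableSet_ball).mpr hFi
  have h1 : (∫ z, g z) = 0 := by
    rw [hgdef, integral_indicator measurableSet_ball]; exact hmom j
  have h2 : (∫ p in polarCoord.target, p.1 • g (Complex.polarCoord.symm p)) = 0 := by
    rw [Complex.integral_comp_polarCoord_symm]; exact h1
  have hip : IntegrableOn (fun p : ℝ×ℝ => p.1 • g (Complex.polarCoord.symm p))
      polarCoord.target := integrableOn_polar g hgi
  have hmeas_eq : (volume : Measure (ℝ×ℝ)).restrict polarCoord.target
      = ((volume.restrict (Set.Ioi (0:ℝ))).prod (volume.restrict (Set.Ioo (-π) π))) := by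
    rw [Measure.prod_restrict]
    rfl
  have hip2 : Integrable (fun p : ℝ×ℝ => p.1 • g (Complex.polarCoord.symm p))
      ((volume.restrict (Set.Ioi (0:ℝ))).prod (volume.restrict (Set.Ioo (-π) π))) := by
    rw [← hmeas_eq]; exact hip
  have h3 : (∫ r in Set.Ioi (0:ℝ),
      (∫ θ in Set.Ioo (-π) π, (r:ℝ) • g (Complex.polarCoord.symm (r, θ)))) = 0 := by
    rw [hmeas_eq] at h2
    rw [MeasureTheory.integral_prod _ hip2] at h2
    exact h2
  set inner : ℝ → ℂ := fun r => ∫ θ in Set.Ioo (-π) π, (r:ℝ) • g (Complex.polarCoord.symm (r, θ))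
    with hinner
  have hvanish : ∀ r ∈ Set.Ioi (0:ℝ), r ∉ Set.Ioo (0:ℝ) 1 → inner r = 0 := by
    intro r hr hnot
    have hr1 : (1:ℝ) ≤ r := by
      rcases lt_or_ge r 1 with h | h
      · exact absurd ⟨hr, h⟩ hnot
      · exact h
    have : ∀ θ : ℝ, g (Complex.polarCoord.symm (r, θ)) = 0 := by
      intro θ
      rw [polar_symm_eq_circleMap, hgdef]
      apply Set.indicator_of_notMem
      rw [mem_ball_zero_iff]
      simp only [Complex.norm_eq_abs, abs_circleMap_zero, not_lt]
      rw [_root_.abs_of_pos (lt_of_lt_of_le zero_lt_one hr1)]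
      exact hr1
    simp only [hinner, this, smul_zero, integral_zero]
  have h4 : (∫ r in Set.Ioo (0:ℝ) 1, inner r) = 0 := by
    rw [← h3]
    symm
    have heq : Set.EqOn inner ((Set.Ioo (0:ℝ) 1).indicator inner) (Set.Ioi 0) := by
      intro r hr
      by_cases h : r ∈ Set.Ioo (0:ℝ) 1
      · rw [Set.indicator_of_mem h]
      · rw [Set.indicator_of_notMem h]; exact hvanish r hr h
    rw [setIntegral_congr_fun measurableSet_Ioi heq, setIntegral_indicator measurableSet_Ioo,
      Set.inter_eq_self_of_subset_right (fun x hx => hx.1)]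
  have h5 : (∫ r in Set.Ioo (0:ℝ) 1, inner r)
      = ((∫ r in Set.Ioo (0:ℝ) 1, (2*π*r^(2*j+1)*(1-r^2)^(2*n-2) : ℝ)) : ℂ) * csA f j := by
    calc (∫ r in Set.Ioo (0:ℝ) 1, inner r)
        = ∫ r in Set.Ioo (0:ℝ) 1, ((2*π*r^(2*j+1)*(1-r^2)^(2*n-2) : ℝ) : ℂ) * csA f j :=
          setIntegral_congr_fun measurableSet_Ioo (fun r hr => inner_theta n f hf j hr.1 hr.2)
      _ = (∫ r in Set.Ioo (0:ℝ) 1, ((2*π*r^(2*j+1)*(1-r^2)^(2*n-2) : ℝ) : ℂ)) * csA f j :=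
          integral_mul_const _ _
      _ = _ := by norm_cast
  have hcpos : 0 < ∫ r in Set.Ioo (0:ℝ) 1, (2*π*r^(2*j+1)*(1-r^2)^(2*n-2) : ℝ) := by
    rw [← integral_Ioc_eq_integral_Ioo, ← intervalIntegral.integral_of_le zero_le_one]
    apply intervalIntegral.intervalIntegral_pos_of_pos_on
    · apply Continuous.intervalIntegrable
      fun_prop
    · intro x hx
      have h1 : 0 < 1 - x^2 := by nlinarith [hx.1, hx.2]
      exact mul_pos (mul_pos (mul_pos two_pos Real.pi_pos) (pow_pos hx.1 _)) (pow_pos h1 _)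
    · exact zero_lt_one
  rw [h4] at h5
  have hcast : ((∫ r in Set.Ioo (0:ℝ) 1, (2*π*r^(2*j+1)*(1-r^2)^(2*n-2) : ℝ)) : ℂ)
      = (((∫ r in Set.Ioo (0:ℝ) 1, (2*π*r^(2*j+1)*(1-r^2)^(2*n-2) : ℝ)) : ℝ) : ℂ) :=
    integral_ofReal
  have hne : ((∫ r in Set.Ioo (0:ℝ) 1, (2*π*r^(2*j+1)*(1-r^2)^(2*n-2) : ℝ)) : ℂ) ≠ 0 := by
    rw [hcast]
    simp only [ne_eq, Complex.ofReal_eq_zero]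
    exact hcpos.ne'
  exact ((mul_eq_zero.mp h5.symm).resolve_left hne)

lemma f_eq_zero_of_csA (f : ℂ → ℂ)
    (hf : DifferentiableOn ℂ f (Metric.ball (0 : ℂ) 1))
    (hA : ∀ j, csA f j = 0) : ∀ z ∈ ball (0:ℂ) 1, f z = 0 := by
  have hball : HasFPowerSeriesOnBall f (cauchyPowerSeries f 0 (1/2:ℝ)) 0
      ((1/2:ℝ).toNNReal : ℝ≥0∞) := by
    have h := DifferentiableOn.hasFPowerSeriesOnBall (f := f) (c := 0) (R := (1/2:ℝ).toNNReal)
      (by rw [Real.coe_toNNReal _ (by norm_num : (0:ℝ) ≤ 1/2)]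
          exact hf.mono (closedBall_subset_ball (by norm_num)))
      (Real.toNNReal_pos.mpr (by norm_num))
    rwa [Real.coe_toNNReal _ (by norm_num : (0:ℝ) ≤ 1/2)] at h
  have hzero : ∀ y ∈ EMetric.ball (0:ℂ) ((1/2:ℝ).toNNReal : ℝ≥0∞), f y = 0 := by
    intro y hy
    have hsum := hball.sum hy
    rw [zero_add] at hsum
    rw [hsum]
    have hterm : ∀ m : ℕ, (cauchyPowerSeries f 0 (1/2:ℝ)) m (fun _ => y) = 0 := by
      intro m
      rw [FormalMultilinearSeries.apply_eq_pow_smul_coeff,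
        show (cauchyPowerSeries f 0 (1/2:ℝ)).coeff m = csA f m from rfl, hA m, smul_zero]
    calc (cauchyPowerSeries f 0 (1/2:ℝ)).sum y = ∑' m : ℕ, (0:ℂ) := by
          unfold FormalMultilinearSeries.sum
          exact tsum_congr hterm
      _ = 0 := tsum_zero
  have hev : f =ᶠ[nhds (0:ℂ)] 0 := by
    have hb2 : EMetric.ball (0:ℂ) ((1/2:ℝ).toNNReal : ℝ≥0∞) ∈ nhds (0:ℂ) :=
      EMetric.ball_mem_nhds _ (by
        exact_mod_cast ENNReal.coe_pos.mpr (Real.toNNReal_pos.mpr (by norm_num)))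
    filter_upwards [hb2] with z hz
    exact hzero z hz
  have han : AnalyticOnNhd ℂ f (ball (0:ℂ) 1) := hf.analyticOnNhd isOpen_ball
  exact fun z hz => (han.eqOn_zero_of_preconnected_of_eventuallyEq_zero
    ((convex_ball (0:ℂ) 1).isPreconnected) (mem_ball_self one_pos) hev) hz

/-- If `f` is in the weighted Bergman space on the unit disk and is orthogonal to every
coherent state `(z−w)^{−2n}`, `|w| > 1`, then `f` is identically zero. Equivalently,
the span of the coherent states is dense in the weighted Bergman space. -/
theorem coherent_states_dense (n : ℕ) (hn : 1 ≤ n) (f : ℂ → ℂ)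
    (hf : DifferentiableOn ℂ f (Metric.ball (0 : ℂ) 1))
    (hL2 : (∫⁻ z in Metric.ball (0 : ℂ) 1,
        ENNReal.ofReal ((1 - ‖z‖ ^ 2) ^ (2 * n - 2)) * (‖f z‖₊ : ℝ≥0∞) ^ 2) < ⊤)
    (horth : ∀ w : ℂ, 1 < ‖w‖ →
      (∫ z in Metric.ball (0 : ℂ) 1,
        ((1 - ‖z‖ ^ 2 : ℝ) : ℂ) ^ (2 * n - 2) *
          ((starRingEnd ℂ) z - (starRingEnd ℂ) w) ^ (-(2 * n : ℤ)) * f z) = 0) :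
    ∀ z ∈ Metric.ball (0 : ℂ) 1, f z = 0 := by
  have hG0 : ∀ u ∈ ball (0:ℂ) 1, u ≠ 0 → csG n f 0 u = 0 := by
    intro u hu hne
    have hu1 : Complex.abs u < 1 := by
      simpa [Complex.norm_eq_abs] using mem_ball_zero_iff.mp hu
    have hupos : 0 < Complex.abs u := Complex.abs.pos hne
    have hw : 1 < Complex.abs (((starRingEnd ℂ) u)⁻¹) := by
      rw [map_inv₀, Complex.abs_conj]
      exact (one_lt_inv₀ hupos).mpr hu1
    have h := horth _ hw
    have hptw : ∀ z ∈ ball (0:ℂ) 1,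
        ((1 - Complex.abs z ^ 2 : ℝ) : ℂ) ^ (2 * n - 2) *
          ((starRingEnd ℂ) z - (starRingEnd ℂ) (((starRingEnd ℂ) u)⁻¹)) ^ (-(2 * n : ℤ)) * f z
        = u^(2*n) * (csW n z * ((starRingEnd ℂ) z) ^ 0 *
            (1 - (starRingEnd ℂ) z * u) ^ (-((2*n + 0 : ℕ) : ℤ)) * f z) := by
      intro z hz
      have hcc : (starRingEnd ℂ) (((starRingEnd ℂ) u)⁻¹) = u⁻¹ := by
        rw [map_inv₀, Complex.conj_conj]
      rw [hcc]
      have hkey : (starRingEnd ℂ) z - u⁻¹ = -(u⁻¹ * (1 - (starRingEnd ℂ) z * u)) := by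
        field_simp
        ring
      have he : Even (-(2 * n : ℤ)) := by
        refine Even.neg ⟨(n:ℤ), by ring⟩
      have hzpow : ((starRingEnd ℂ) z - u⁻¹) ^ (-(2 * n : ℤ))
          = u^(2*n) * (1 - (starRingEnd ℂ) z * u) ^ (-((2*n + 0 : ℕ) : ℤ)) := by
        rw [hkey, he.neg_zpow, mul_zpow, inv_zpow', neg_neg]
        norm_cast
      rw [csW, hzpow]
      ring
    have h2 : u^(2*n) * csG n f 0 u = 0 := by
      rw [csG, ← integral_const_mul, ← setIntegral_congr_fun measurableSet_ball hptw]
      exact h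
    exact (mul_eq_zero.mp h2).resolve_left (pow_ne_zero _ hne)
  have hmom := moments_zero n hn f hf hL2 hG0
  exact f_eq_zero_of_csA f hf (csA_zero n hn f hf hL2 hmom)
end

section
/- Let p ≥ 1 be an integer and define the s-channel conformal block 𝒢_p(z) = Σ_{m=0}^∞ ((p)_m)²/((2p)_m · m!) · z^{p+m}. Then this power series converges absolutely for every z ∈ ℂ with |z| < 1, and on the unit disk 𝒢_p satisfies the Casimir differential equation z²(1−z)·𝒢_p''(z) − z²·𝒢_p'(z) = p(p−1)·𝒢_p(z). (This is the statement that 𝒢_Δ(z) = z^Δ · ₂F₁(Δ,Δ;2Δ;z) solves the Casimir equation.) -/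
open Complex Metric Filter

/-- The s-channel conformal block
`𝒢_p(z) = Σ_{m=0}^∞ ((p)_m)²/((2p)_m · m!) · z^{p+m} = z^p ₂F₁(p,p;2p;z)`. -/
noncomputable def Gblock (p : ℕ) (z : ℂ) : ℂ :=
  ∑' m : ℕ,
    ((ascPochhammer ℂ m).eval (p : ℂ)) ^ 2 /
        ((ascPochhammer ℂ m).eval ((2 * p : ℕ) : ℂ) * (m.factorial : ℂ)) * z ^ (p + m)

noncomputable def cC (p m : ℕ) : ℂ :=
  ((ascPochhammer ℂ m).eval (p : ℂ)) ^ 2 /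
    ((ascPochhammer ℂ m).eval ((2 * p : ℕ) : ℂ) * (m.factorial : ℂ))

noncomputable def ddC (p m : ℕ) : ℂ :=
  (((p:ℂ)+m)*((p:ℂ)+m-1) - (p:ℂ)*((p:ℂ)-1)) * cC p m

lemma ascFactorial_mono_base {a b : ℕ} (h : a ≤ b) : ∀ k, a.ascFactorial k ≤ b.ascFactorial k
  | 0 => le_refl 1
  | (k+1) => by
      rw [Nat.ascFactorial_succ, Nat.ascFactorial_succ]
      exact Nat.mul_le_mul (by omega) (ascFactorial_mono_base h k)

lemma cC_eq (p m : ℕ) :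
    cC p m = ((p.ascFactorial m : ℕ) : ℂ) ^ 2 /
      ((((2*p).ascFactorial m : ℕ) : ℂ) * (m.factorial : ℂ)) := by
  unfold cC
  rw [← ascPochhammer_eval_cast, ← ascPochhammer_eval_cast,
    ascPochhammer_nat_eq_ascFactorial, ascPochhammer_nat_eq_ascFactorial]

lemma cC_norm_le (p : ℕ) (hp : 1 ≤ p) (m : ℕ) : ‖cC p m‖ ≤ ((p+m : ℕ) : ℝ)^p := by
  have hA : p.ascFactorial m ≤ m.factorial * (p+m)^p := by
    rw [Nat.ascFactorial_eq_factorial_mul_choose']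
    refine Nat.mul_le_mul_left _ ?_
    have h1 : (p + m - 1).choose m = (p+m-1).choose (p-1) := by
      have h := Nat.choose_symm (n := p+m-1) (k := m) (by omega)
      rw [show p+m-1-m = p-1 by omega] at h
      exact h.symm
    calc (p+m-1).choose m = (p+m-1).choose (p-1) := h1
      _ ≤ (p+m-1)^(p-1) := Nat.choose_le_pow _ _
      _ ≤ (p+m)^(p-1) := Nat.pow_le_pow_left (by omega) _
      _ ≤ (p+m)^p := Nat.pow_le_pow_right (by omega) (by omega)
  have hAB : p.ascFactorial m ≤ (2*p).ascFactorial m := ascFactorial_mono_base (by omega) m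
  rw [cC_eq, norm_div, norm_pow, norm_mul, Complex.norm_natCast, Complex.norm_natCast,
    Complex.norm_natCast]
  have hBpos : 0 < (2*p).ascFactorial m := by
    have h := Nat.ascFactorial_pos (2*p-1) m
    rwa [show 2*p - 1 + 1 = 2*p by omega] at h
  have hFpos : 0 < m.factorial := m.factorial_pos
  rw [div_le_iff₀ (by positivity)]
  have hnat : (p.ascFactorial m)^2 ≤ (p+m)^p * ((2*p).ascFactorial m * m.factorial) := by
    calc (p.ascFactorial m)^2 = p.ascFactorial m * p.ascFactorial m := sq _
      _ ≤ (2*p).ascFactorial m * (m.factorial * (p+m)^p) := Nat.mul_le_mul hAB hA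
      _ = (p+m)^p * ((2*p).ascFactorial m * m.factorial) := by ring
  exact_mod_cast hnat

lemma cC_succ (p : ℕ) (hp : 1 ≤ p) (m : ℕ) :
    cC p (m+1) * (((m:ℂ)+1) * (2*(p:ℂ)+m)) = cC p m * ((p:ℂ)+m)^2 := by
  have hB : (ascPochhammer ℂ m).eval ((2*p:ℕ):ℂ) ≠ 0 := by
    rw [← ascPochhammer_eval_cast, ascPochhammer_nat_eq_ascFactorial]
    have h : 0 < (2*p).ascFactorial m := by
      have h2 := Nat.ascFactorial_pos (2*p-1) m
      rwa [show 2*p - 1 + 1 = 2*p by omega] at h2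
    exact_mod_cast h.ne'
  have hF : ((m.factorial : ℂ)) ≠ 0 := Nat.cast_ne_zero.2 m.factorial_ne_zero
  have h2pm : (2*(p:ℂ)+(m:ℂ)) ≠ 0 := by
    have h : ((2*p+m : ℕ) : ℂ) ≠ 0 := Nat.cast_ne_zero.2 (by omega)
    push_cast at h
    exact h
  have hm1 : ((m:ℂ)+1) ≠ 0 := by
    have h : ((m+1 : ℕ) : ℂ) ≠ 0 := Nat.cast_ne_zero.2 (by omega)
    push_cast at h
    exact h
  unfold cC
  rw [ascPochhammer_succ_eval, ascPochhammer_succ_eval, Nat.factorial_succ]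
  push_cast at hB ⊢
  rw [div_mul_eq_mul_div, div_mul_eq_mul_div, div_eq_div_iff (mul_ne_zero (mul_ne_zero hB h2pm) (mul_ne_zero hm1 hF)) (mul_ne_zero hB hF)]
  ring

lemma ddC_succ (p : ℕ) (hp : 1 ≤ p) (m : ℕ) :
    ddC p (m+1) = ((p:ℂ)+m)^2 * cC p m := by
  unfold ddC
  have h : ((p:ℂ)+(m+1:ℕ))*((p:ℂ)+(m+1:ℕ)-1) - (p:ℂ)*((p:ℂ)-1)
      = ((m:ℂ)+1)*(2*(p:ℂ)+m) := by push_cast; ring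
  rw [h]
  linear_combination cC_succ p hp m

lemma ddC_zero (p : ℕ) : ddC p 0 = 0 := by
  unfold ddC
  norm_num

lemma pointwise_id (p : ℕ) (hp : 1 ≤ p) (m : ℕ) (z : ℂ) :
    z^2*(1-z)*(cC p m * ((p+m:ℕ):ℂ) * ((p+m-1:ℕ):ℂ) * z^(p+m-2))
      - z^2*(cC p m * ((p+m:ℕ):ℂ) * z^(p+m-1))
      - (p:ℂ)*((p:ℂ)-1)*(cC p m * z^(p+m))
    = ddC p m * z^(p+m) - ddC p (m+1) * z^(p+(m+1)) := by
  rw [ddC_succ p hp m]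
  unfold ddC
  have e1 : ((p+m:ℕ):ℂ) = (p:ℂ)+m := by push_cast; ring
  have e2 : ((p+m-1:ℕ):ℂ) = (p:ℂ)+m-1 := by
    rw [Nat.cast_sub (show 1 ≤ p+m by omega)]
    push_cast; ring
  rw [e1, e2]
  rcases Nat.lt_or_ge (p+m) 2 with h2|h2
  · obtain ⟨hp1, hm0⟩ : p = 1 ∧ m = 0 := by omega
    subst hp1; subst hm0
    norm_num
    ring
  · obtain ⟨n, hn⟩ : ∃ n, p+m = n+2 := ⟨p+m-2, by omega⟩
    rw [show p+m-2 = n by omega, show p+m-1 = n+1 by omega, hn,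
      show p+(m+1) = n+3 by omega]
    ring

lemma sum_aux {r : ℝ} (h0 : 0 < r) (hr : r < 1) (k q j : ℕ) :
    Summable (fun m : ℕ => ((q+m : ℕ) : ℝ)^k * r ^ (q + m - j)) := by
  have hrne : r ≠ 0 := ne_of_gt h0
  have base : Summable (fun m : ℕ => ((m : ℝ)+1)^k * r ^ m) := by
    have h1 := summable_pow_mul_geometric_of_norm_lt_one (R := ℝ) k
      (r := r) (by rwa [Real.norm_eq_abs, abs_of_pos h0])
    have h2 := (summable_nat_add_iff 1).2 h1
    have h3 := h2.mul_left r⁻¹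
    refine h3.congr fun m => ?_
    push_cast
    field_simp
    ring
  rw [← summable_nat_add_iff j]
  refine Summable.of_nonneg_of_le (fun m => by positivity) (fun m => ?_)
    (base.mul_left (((q+j+1:ℕ):ℝ)^k * r^q))
  have he : q + (m + j) - j = q + m := by omega
  rw [he]
  have h1 : ((q+(m+j) : ℕ):ℝ)^k ≤ ((q+j+1:ℕ):ℝ)^k * ((m:ℝ)+1)^k := by
    rw [← mul_pow]
    apply pow_le_pow_left₀ (by positivity)
    push_cast
    nlinarith [Nat.cast_nonneg (α := ℝ) m, Nat.cast_nonneg (α := ℝ) q, Nat.cast_nonneg (α := ℝ) j]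
  calc ((q+(m+j) : ℕ):ℝ)^k * r ^ (q + m)
      = ((q+(m+j) : ℕ):ℝ)^k * (r^q * r^m) := by rw [pow_add]
    _ ≤ (((q+j+1:ℕ):ℝ)^k * ((m:ℝ)+1)^k) * (r^q * r^m) := by
        apply mul_le_mul_of_nonneg_right h1 (by positivity)
    _ = ((q+j+1:ℕ):ℝ)^k * r^q * (((m:ℝ)+1)^k * r^m) := by ring

/-- For every integer `p ≥ 1`, the power series defining `𝒢_p` converges absolutely on
the unit disk, and there `𝒢_p` satisfies the Casimir differential equation
`z²(1−z)·𝒢_p'' − z²·𝒢_p' = p(p−1)·𝒢_p`. -/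
theorem sChannel_block_casimir (p : ℕ) (hp : 1 ≤ p) :
    (∀ z : ℂ, ‖z‖ < 1 → Summable fun m : ℕ =>
      ‖((ascPochhammer ℂ m).eval (p : ℂ)) ^ 2 /
          ((ascPochhammer ℂ m).eval ((2 * p : ℕ) : ℂ) * (m.factorial : ℂ)) * z ^ (p + m)‖) ∧
    (∀ z : ℂ, ‖z‖ < 1 →
      z ^ 2 * (1 - z) * deriv (deriv (Gblock p)) z - z ^ 2 * deriv (Gblock p) z =
        (p : ℂ) * ((p : ℂ) - 1) * Gblock p z) := by
  have hcb : ∀ m, ‖cC p m‖ ≤ ((p+m:ℕ):ℝ)^p := cC_norm_le p hp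
  -- generic bounds on a closed ball of radius r
  have hb0 : ∀ (r : ℝ) (w : ℂ), ‖w‖ ≤ r → ∀ m,
      ‖cC p m * w^(p+m)‖ ≤ ((p+m:ℕ):ℝ)^p * r^(p+m) := by
    intro r w hw m
    have h := mul_le_mul (hcb m) (pow_le_pow_left₀ (norm_nonneg w) hw (p+m))
      (by positivity) (by positivity)
    simpa [norm_mul, norm_pow] using h
  have hb1 : ∀ (r : ℝ) (w : ℂ), ‖w‖ ≤ r → ∀ m,
      ‖cC p m * ((p+m:ℕ):ℂ) * w^(p+m-1)‖ ≤ ((p+m:ℕ):ℝ)^(p+1) * r^(p+m-1) := by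
    intro r w hw m
    rw [norm_mul, norm_mul, norm_pow, Complex.norm_natCast]
    calc ‖cC p m‖ * ((p+m:ℕ):ℝ) * ‖w‖^(p+m-1)
        ≤ ((p+m:ℕ):ℝ)^p * ((p+m:ℕ):ℝ) * r^(p+m-1) := by
          gcongr
          exact hcb m
      _ = ((p+m:ℕ):ℝ)^(p+1) * r^(p+m-1) := by rw [pow_succ]
  have hb2 : ∀ (r : ℝ) (w : ℂ), ‖w‖ ≤ r → ∀ m,
      ‖cC p m * ((p+m:ℕ):ℂ) * ((p+m-1:ℕ):ℂ) * w^(p+m-2)‖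
        ≤ ((p+m:ℕ):ℝ)^(p+2) * r^(p+m-2) := by
    intro r w hw m
    rw [norm_mul, norm_mul, norm_mul, norm_pow, Complex.norm_natCast, Complex.norm_natCast]
    have hle : ((p+m-1:ℕ):ℝ) ≤ ((p+m:ℕ):ℝ) := Nat.cast_le.2 (by omega)
    calc ‖cC p m‖ * ((p+m:ℕ):ℝ) * ((p+m-1:ℕ):ℝ) * ‖w‖^(p+m-2)
        ≤ ((p+m:ℕ):ℝ)^p * ((p+m:ℕ):ℝ) * ((p+m:ℕ):ℝ) * r^(p+m-2) := by
          gcongr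
          exact hcb m
      _ = ((p+m:ℕ):ℝ)^(p+2) * r^(p+m-2) := by ring
  constructor
  · intro z hz
    have hr0 : (0:ℝ) < (‖z‖+1)/2 := by positivity
    have hr1 : (‖z‖+1)/2 < 1 := by linarith
    have hzr : ‖z‖ ≤ (‖z‖+1)/2 := by linarith
    show Summable fun m : ℕ => ‖cC p m * z ^ (p + m)‖
    exact Summable.of_nonneg_of_le (fun _ => norm_nonneg _) (hb0 _ z hzr)
      (sum_aux hr0 hr1 p p 0)
  · intro z hz
    set r : ℝ := (‖z‖+1)/2 with hrdef
    have hr0 : (0:ℝ) < r := by positivity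
    have hr1 : r < 1 := by rw [hrdef]; linarith
    have hzr : ‖z‖ < r := by rw [hrdef]; linarith
    have hsum0 : ∀ w : ℂ, ‖w‖ ≤ r → Summable (fun m => cC p m * w^(p+m)) :=
      fun w hw => Summable.of_norm (Summable.of_nonneg_of_le (fun _ => norm_nonneg _)
        (hb0 r w hw) (sum_aux hr0 hr1 p p 0))
    have hsum1 : ∀ w : ℂ, ‖w‖ ≤ r → Summable (fun m => cC p m * ((p+m:ℕ):ℂ) * w^(p+m-1)) :=
      fun w hw => Summable.of_norm (Summable.of_nonneg_of_le (fun _ => norm_nonneg _)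
        (hb1 r w hw) (sum_aux hr0 hr1 (p+1) p 1))
    have hsum2 : ∀ w : ℂ, ‖w‖ ≤ r →
        Summable (fun m => cC p m * ((p+m:ℕ):ℂ) * ((p+m-1:ℕ):ℂ) * w^(p+m-2)) :=
      fun w hw => Summable.of_norm (Summable.of_nonneg_of_le (fun _ => norm_nonneg _)
        (hb2 r w hw) (sum_aux hr0 hr1 (p+2) p 2))
    have hder1 : ∀ (m : ℕ) (w : ℂ), HasDerivAt (fun x => cC p m * x^(p+m))
        (cC p m * ((p+m:ℕ):ℂ) * w^(p+m-1)) w := by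
      intro m w
      simpa [mul_assoc] using (hasDerivAt_pow (p+m) w).const_mul (cC p m)
    have hder2 : ∀ (m : ℕ) (w : ℂ), HasDerivAt (fun x => cC p m * ((p+m:ℕ):ℂ) * x^(p+m-1))
        (cC p m * ((p+m:ℕ):ℂ) * ((p+m-1:ℕ):ℂ) * w^(p+m-2)) w := by
      intro m w
      have h := (hasDerivAt_pow (p+m-1) w).const_mul (cC p m * ((p+m:ℕ):ℂ))
      rw [show p+m-1-1 = p+m-2 by omega] at h
      simpa [mul_assoc] using h
    have hball1 : ∀ y ∈ ball (0:ℂ) r, HasDerivAt (fun w : ℂ => ∑' m, cC p m * w^(p+m))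
        (∑' m, cC p m * ((p+m:ℕ):ℂ) * y^(p+m-1)) y := by
      intro y hy
      exact hasDerivAt_tsum_of_isPreconnected (sum_aux hr0 hr1 (p+1) p 1) isOpen_ball
        (convex_ball (0:ℂ) r).isPreconnected (fun m w _ => hder1 m w)
        (fun m w hw => hb1 r w (le_of_lt (mem_ball_zero_iff.1 hw)) m)
        (mem_ball_self hr0) (hsum0 0 (by simpa using hr0.le)) hy
    have hball2 : ∀ y ∈ ball (0:ℂ) r,
        HasDerivAt (fun w : ℂ => ∑' m, cC p m * ((p+m:ℕ):ℂ) * w^(p+m-1))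
        (∑' m, cC p m * ((p+m:ℕ):ℂ) * ((p+m-1:ℕ):ℂ) * y^(p+m-2)) y := by
      intro y hy
      exact hasDerivAt_tsum_of_isPreconnected (sum_aux hr0 hr1 (p+2) p 2) isOpen_ball
        (convex_ball (0:ℂ) r).isPreconnected (fun m w _ => hder2 m w)
        (fun m w hw => hb2 r w (le_of_lt (mem_ball_zero_iff.1 hw)) m)
        (mem_ball_self hr0) (hsum1 0 (by simpa using hr0.le)) hy
    have hzball : z ∈ ball (0:ℂ) r := mem_ball_zero_iff.2 hzr
    have hGb : Gblock p = fun w : ℂ => ∑' m, cC p m * w^(p+m) := rfl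
    have hd1 : ∀ y ∈ ball (0:ℂ) r,
        deriv (Gblock p) y = ∑' m, cC p m * ((p+m:ℕ):ℂ) * y^(p+m-1) := by
      intro y hy
      rw [hGb]
      exact (hball1 y hy).deriv
    have hd2 : deriv (deriv (Gblock p)) z
        = ∑' m, cC p m * ((p+m:ℕ):ℂ) * ((p+m-1:ℕ):ℂ) * z^(p+m-2) := by
      have hev : deriv (Gblock p) =ᶠ[nhds z]
          (fun w => ∑' m, cC p m * ((p+m:ℕ):ℂ) * w^(p+m-1)) := by
        filter_upwards [isOpen_ball.mem_nhds hzball] with y hy using hd1 y hy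
      rw [hev.deriv_eq]
      exact (hball2 z hzball).deriv
    rw [hd2, hd1 z hzball, show Gblock p z = ∑' m, cC p m * z^(p+m) from rfl]
    have hs0 := (hsum0 z hzr.le).hasSum
    have hs1 := (hsum1 z hzr.le).hasSum
    have hs2 := (hsum2 z hzr.le).hasSum
    have hsF := ((hs2.mul_left (z^2*(1-z))).sub (hs1.mul_left (z^2))).sub
      (hs0.mul_left ((p:ℂ)*((p:ℂ)-1)))
    have hT := hsF.tsum_eq
    have h1 : ∑' m, (z^2*(1-z)*(cC p m * ((p+m:ℕ):ℂ) * ((p+m-1:ℕ):ℂ) * z^(p+m-2))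
          - z^2*(cC p m * ((p+m:ℕ):ℂ) * z^(p+m-1))
          - (p:ℂ)*((p:ℂ)-1)*(cC p m * z^(p+m)))
        = ∑' m, (ddC p m * z^(p+m) - ddC p (m+1) * z^(p+(m+1))) :=
      tsum_congr (fun m => pointwise_id p hp m z)
    have hsh : Summable (fun m => ddC p m * z^(p+m)) := by
      refine Summable.of_norm (Summable.of_nonneg_of_le (fun _ => norm_nonneg _) (fun m => ?_)
        ((sum_aux hr0 hr1 (p+2) p 0).mul_left 4))
      have e1 : ((p:ℂ)+(m:ℂ)) = ((p+m:ℕ):ℂ) := by push_cast; ring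
      have e2 : (p:ℂ)+(m:ℂ)-1 = ((p+m-1:ℕ):ℂ) := by
        rw [Nat.cast_sub (show 1 ≤ p+m by omega)]; push_cast; ring
      have e3 : (p:ℂ)-1 = ((p-1:ℕ):ℂ) := by
        rw [Nat.cast_sub hp]; push_cast; ring
      have hA : ‖((p:ℂ)+m)*((p:ℂ)+m-1) - (p:ℂ)*((p:ℂ)-1)‖ ≤ 4*((p+m:ℕ):ℝ)^2 := by
        calc ‖((p:ℂ)+m)*((p:ℂ)+m-1) - (p:ℂ)*((p:ℂ)-1)‖
            ≤ ‖((p:ℂ)+m)*((p:ℂ)+m-1)‖ + ‖(p:ℂ)*((p:ℂ)-1)‖ := norm_sub_le _ _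
          _ = ((p+m:ℕ):ℝ)*((p+m-1:ℕ):ℝ) + ((p:ℕ):ℝ)*((p-1:ℕ):ℝ) := by
              rw [norm_mul, norm_mul, e2, e3, e1]
              simp only [Complex.norm_natCast]
          _ ≤ 4*((p+m:ℕ):ℝ)^2 := by
              have b1 : ((p+m-1:ℕ):ℝ) ≤ ((p+m:ℕ):ℝ) := Nat.cast_le.2 (by omega)
              have b2 : ((p:ℕ):ℝ) ≤ ((p+m:ℕ):ℝ) := Nat.cast_le.2 (by omega)
              have b3 : ((p-1:ℕ):ℝ) ≤ ((p+m:ℕ):ℝ) := Nat.cast_le.2 (by omega)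
              have b0 : (0:ℝ) ≤ ((p+m:ℕ):ℝ) := Nat.cast_nonneg _
              have b4 : (0:ℝ) ≤ ((p:ℕ):ℝ) := Nat.cast_nonneg _
              have b5 : (0:ℝ) ≤ ((p+m-1:ℕ):ℝ) := Nat.cast_nonneg _
              nlinarith
      have hd : ‖ddC p m‖ ≤ 4*((p+m:ℕ):ℝ)^2 * ((p+m:ℕ):ℝ)^p := by
        unfold ddC
        rw [norm_mul]
        exact mul_le_mul hA (hcb m) (norm_nonneg _) (by positivity)
      calc ‖ddC p m * z^(p+m)‖ = ‖ddC p m‖ * ‖z‖^(p+m) := by rw [norm_mul, norm_pow]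
        _ ≤ (4*((p+m:ℕ):ℝ)^2 * ((p+m:ℕ):ℝ)^p) * r^(p+m) :=
            mul_le_mul hd (pow_le_pow_left₀ (norm_nonneg z) hzr.le (p+m))
              (by positivity) (by positivity)
        _ = 4*(((p+m:ℕ):ℝ)^(p+2) * r^(p+m)) := by ring
    have hsh1 : Summable (fun m => ddC p (m+1) * z^(p+(m+1))) := by
      have h := (summable_nat_add_iff (f := fun m => ddC p m * z^(p+m)) 1).2 hsh
      exact h
    have h2 : ∑' m, (ddC p m * z^(p+m) - ddC p (m+1) * z^(p+(m+1)))
        = (∑' m, ddC p m * z^(p+m)) - ∑' m, ddC p (m+1) * z^(p+(m+1)) :=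
      Summable.tsum_sub hsh hsh1
    have h3 : ∑' m, ddC p m * z^(p+m)
        = ddC p 0 * z^(p+0) + ∑' m, ddC p (m+1) * z^(p+(m+1)) := Summable.tsum_eq_zero_add hsh
    have h4 : ∑' m, (ddC p m * z^(p+m) - ddC p (m+1) * z^(p+(m+1))) = 0 := by
      rw [h2, h3, ddC_zero]
      ring
    have h5 : z^2*(1-z)*(∑' m, cC p m * ((p+m:ℕ):ℂ) * ((p+m-1:ℕ):ℂ) * z^(p+m-2))
        - z^2*(∑' m, cC p m * ((p+m:ℕ):ℂ) * z^(p+m-1))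
        - (p:ℂ)*((p:ℂ)-1)*(∑' m, cC p m * z^(p+m)) = 0 := by
      rw [← hT, h1, h4]
    linear_combination h5
end

section
/- For all integers p, q with 1 ≤ q ≤ p, the rational number Σ_{j+m = p−q, j,m ≥ 0} ((1−p)_j)² ((q)_m)² / ((2−2p)_j · j! · (2q)_m · m!) equals 1 if p = q and equals 0 if q < p. (This is the orthogonality relation (1/2πi)∮ dz z^{−2} 𝒢_{1−p}(z) 𝒢_q(z) = δ_{p,q} for the hypergeometric blocks 𝒢_Δ(z) = z^Δ ₂F₁(Δ,Δ;2Δ;z), expressed as the vanishing of the coefficient-extraction sum.) -/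
set_option maxHeartbeats 1000000


private lemma poch_neg_ne (q n : ℕ) (hq : 1 ≤ q) :
    ∀ j, j ≤ n → (ascPochhammer ℚ j).eval (2 - 2*(q:ℚ) - 2*n) ≠ 0 := by
  intro j hj
  induction j with
  | zero => simp
  | succ i ih =>
    rw [ascPochhammer_succ_eval]
    refine mul_ne_zero (ih (by omega)) (ne_of_lt ?_)
    have hq' : (1:ℚ) ≤ (q:ℚ) := by exact_mod_cast hq
    have hi : (i:ℚ) + 1 ≤ (n:ℚ) := by exact_mod_cast hj
    linarith

private lemma poch_pos_ne (x : ℚ) (hx : 0 < x) (m : ℕ) :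
    (ascPochhammer ℚ m).eval x ≠ 0 :=
  ne_of_gt (ascPochhammer_pos m x hx)

private lemma block_key (q n : ℕ) (hq : 1 ≤ q) (hn : 1 ≤ n) :
    ∀ k, k ≤ n →
    (∑ j ∈ Finset.range (k+1),
        ((ascPochhammer ℚ j).eval (1 - (q:ℚ) - n)) ^ 2 *
            ((ascPochhammer ℚ (n - j)).eval (q : ℚ)) ^ 2 /
          ((ascPochhammer ℚ j).eval (2 - 2*(q:ℚ) - 2*n) * (j.factorial : ℚ) *
            (ascPochhammer ℚ (n - j)).eval (2 * (q : ℚ)) *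
            ((n - j).factorial : ℚ)))
    = ((n:ℚ) - k) * ((2*(q:ℚ) + n - 1) - k) / ((n:ℚ) * (2*(q:ℚ) + n - 1)) *
      (((ascPochhammer ℚ k).eval (1 - (q:ℚ) - n)) ^ 2 *
            ((ascPochhammer ℚ (n - k)).eval (q : ℚ)) ^ 2 /
          ((ascPochhammer ℚ k).eval (2 - 2*(q:ℚ) - 2*n) * (k.factorial : ℚ) *
            (ascPochhammer ℚ (n - k)).eval (2 * (q : ℚ)) *
            ((n - k).factorial : ℚ))) := by
  have hq' : (1:ℚ) ≤ (q:ℚ) := by exact_mod_cast hq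
  have hn' : (1:ℚ) ≤ (n:ℚ) := by exact_mod_cast hn
  have hnne : (n:ℚ) ≠ 0 := by positivity
  have hane : (2*(q:ℚ) + n - 1) ≠ 0 := by
    intro h; nlinarith
  intro k
  induction k with
  | zero =>
    intro _
    rw [Finset.sum_range_one]
    rw [Nat.cast_zero, sub_zero, sub_zero, div_self (mul_ne_zero hnne hane), one_mul]
  | succ k ih =>
    intro hk1
    have hk : k ≤ n := by omega
    rw [Finset.sum_range_succ, ih hk]
    -- abbreviations
    have hmk : n - k = (n - (k+1)) + 1 := by omega
    set m := n - (k + 1) with hm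
    have hmcast : (m : ℚ) = (n : ℚ) - (k:ℚ) - 1 := by
      rw [hm]; push_cast [Nat.cast_sub hk1]; ring
    rw [hmk]
    simp only [ascPochhammer_succ_eval, Nat.factorial_succ, Nat.cast_mul, Nat.cast_add,
      Nat.cast_one]
    have hC : (ascPochhammer ℚ k).eval (2 - 2*(q:ℚ) - 2*n) ≠ 0 := poch_neg_ne q n hq k hk
    have hD : (ascPochhammer ℚ m).eval (2 * (q:ℚ)) ≠ 0 := poch_pos_ne _ (by positivity) m
    have hkQ : (k:ℚ) + 1 ≠ 0 := by positivity
    have hFk : ((k.factorial : ℚ)) ≠ 0 := by positivity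
    have hFm : ((m.factorial : ℚ)) ≠ 0 := by positivity
    have hknQ : (k:ℚ) + 1 ≤ (n:ℚ) := by exact_mod_cast hk1
    have hfac1 : (2 - 2*(q:ℚ) - 2*n + k) ≠ 0 := by intro h; nlinarith
    have hfac2 : (2*(q:ℚ) + m) ≠ 0 := by rw [hmcast]; intro h; nlinarith
    rw [hmcast]
    set A := (ascPochhammer ℚ k).eval (1 - (q:ℚ) - n) with hA
    set B := (ascPochhammer ℚ m).eval ((q:ℚ)) with hB
    set C := (ascPochhammer ℚ k).eval (2 - 2*(q:ℚ) - 2*n) with hC2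
    set D := (ascPochhammer ℚ m).eval (2 * (q:ℚ)) with hD2
    set K := (k.factorial : ℚ) with hK
    set M := (m.factorial : ℚ) with hM
    have hprod : ((n:ℚ) * (2*(q:ℚ)+n-1)) ≠ 0 := mul_ne_zero hnne hane
    have hfac2' : (2*(q:ℚ) + ((n:ℚ) - k - 1)) ≠ 0 := by intro h; nlinarith
    have hnk0 : ((n:ℚ) - (k:ℚ) - 1 + 1) ≠ 0 := by intro h; nlinarith
    have hnkne : ((n:ℚ) - (k:ℚ)) ≠ 0 := by intro h; nlinarith
    have hfac1' : (2 * (1 - (q:ℚ) - n) + k) ≠ 0 := by intro h; nlinarith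
    field_simp [hC, hD, hkQ, hFk, hFm, hfac1, hfac1', hfac2', hnk0, hprod]
    have hY : (n:ℚ) * (2*(q:ℚ)+(n:ℚ)-1) * (C * K * (D * (2*(q:ℚ) + ((n:ℚ)-(k:ℚ)-1))) * (((n:ℚ)-(k:ℚ)) * M)) ≠ 0 :=
      mul_ne_zero hprod (mul_ne_zero (mul_ne_zero (mul_ne_zero hC hFk)
        (mul_ne_zero hD hfac2')) (mul_ne_zero hnkne hFm))
    ring

/-- Orthogonality of the hypergeometric blocks `𝒢_Δ(z) = z^Δ ₂F₁(Δ,Δ;2Δ;z)`: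
for `1 ≤ q ≤ p`, the coefficient-extraction sum
`Σ_{j+m=p−q} ((1−p)_j)²((q)_m)²/((2−2p)_j j! (2q)_m m!)` equals `δ_{p,q}`. -/
theorem block_orthogonality (p q : ℕ) (hq : 1 ≤ q) (hpq : q ≤ p) :
    (∑ j ∈ Finset.range (p - q + 1),
        ((ascPochhammer ℚ j).eval (1 - (p : ℚ))) ^ 2 *
            ((ascPochhammer ℚ (p - q - j)).eval (q : ℚ)) ^ 2 /
          ((ascPochhammer ℚ j).eval (2 - 2 * (p : ℚ)) * (j.factorial : ℚ) *
            (ascPochhammer ℚ (p - q - j)).eval (2 * (q : ℚ)) *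
            ((p - q - j).factorial : ℚ))) =
      if p = q then 1 else 0 := by
  set n := p - q with hn
  have hp : (p : ℚ) = (q : ℚ) + n := by
    rw [hn]; push_cast [Nat.cast_sub hpq]; ring
  by_cases h : p = q
  · subst h
    simp [hn, Nat.sub_self]
  · have hn1 : 1 ≤ n := by omega
    rw [if_neg h]
    have h1 : (1 : ℚ) - (p:ℚ) = 1 - (q:ℚ) - n := by rw [hp]; ring
    have h2 : (2 : ℚ) - 2*(p:ℚ) = 2 - 2*(q:ℚ) - 2*n := by rw [hp]; ring
    rw [h1, h2]
    have := block_key q n hq hn1 n le_rfl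
    rw [this]
    have : ((n:ℚ) - n) = 0 := by ring
    rw [this]
    ring
end

section
/- Let g ≥ 0 and r ≥ 0 be integers and k₁,…,k_r ≥ 2 be integers with negative orbifold Euler characteristic: 2 − 2g − Σ_{i=1}^r (k_i−1)/k_i < 0 (as rational numbers). Then there exists n ∈ {1, 2, 3, 4, 6} with ℓ_n ≥ 1, where ℓ_n = (2n−1)(g−1) + Σ_{i=1}^r ⌊n(k_i−1)/k_i⌋ + δ_{n,1}. (Every hyperbolic 2-orbifold admits a nonzero holomorphic modular form of weight 2n for some n ∈ {1,2,3,4,6}; in particular n_min ∈ {1,2,3,4,6}.) -/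
/-- The multiplicity `ℓ_n = (2n−1)(g−1) + Σᵢ ⌊n(kᵢ−1)/kᵢ⌋ + δ_{n,1}` of the discrete
series `𝒟_n`, i.e. the dimension of the space of holomorphic modular forms of weight
`2n` for a cocompact Fuchsian group of signature `[g; k₁,…,k_r]` (Riemann–Roch). -/
def ell (g r : ℕ) (k : Fin r → ℕ) (n : ℕ) : ℤ :=
  (2 * (n : ℤ) - 1) * ((g : ℤ) - 1) +
    (∑ i, ⌊(n : ℚ) * ((k i : ℚ) - 1) / (k i : ℚ)⌋) + (if n = 1 then 1 else 0)

lemma F_eq (n k : ℕ) (hk : 1 ≤ k) :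
    ⌊(n : ℚ) * ((k : ℚ) - 1) / (k : ℚ)⌋ = ((n * (k - 1)) / k : ℕ) := by
  have : (n : ℚ) * ((k : ℚ) - 1) = ((n * (k - 1) : ℕ) : ℚ) := by
    push_cast [Nat.cast_sub hk]; ring
  rw [this, Rat.floor_natCast_div_natCast]; exact (Int.natCast_div _ _).symm

lemma d2 (k : ℕ) (h : 2 ≤ k) : 2 * (k - 1) / k = 1 :=
  Nat.div_eq_of_lt_le (by omega) (by omega)

lemma d3 (k : ℕ) (h : 3 ≤ k) : 3 * (k - 1) / k = 2 :=
  Nat.div_eq_of_lt_le (by omega) (by omega)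

lemma d4 (k : ℕ) (h : 4 ≤ k) : 4 * (k - 1) / k = 3 :=
  Nat.div_eq_of_lt_le (by omega) (by omega)

lemma d6 (k : ℕ) (h : 7 ≤ k) : 6 * (k - 1) / k = 5 :=
  Nat.div_eq_of_lt_le (by omega) (by omega)

lemma ge7 (c : ℕ) (hc : 2 ≤ c) (h : 1 / (c : ℚ) < 1 / 6) : 7 ≤ c := by
  have hc0 : (0 : ℚ) < c := by exact_mod_cast (by omega : 0 < c)
  have h6 : (6 : ℚ) < c := by
    by_contra hle
    push_neg at hle
    have : 1 / (6 : ℚ) ≤ 1 / c := one_div_le_one_div_of_le hc0 hle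
    linarith
  have : 6 < c := by exact_mod_cast h6
  omega

lemma triple2 (b c : ℕ) (hb : 3 ≤ b) (hc : 3 ≤ c)
    (h : 1 / (b : ℚ) + 1 / (c : ℚ) < 1 / 2) :
    ∃ n ∈ ({3, 4, 6} : Finset ℕ),
      2 * n ≤ n * (2 - 1) / 2 + n * (b - 1) / b + n * (c - 1) / c := by
  by_cases hb3 : b = 3
  · subst hb3
    have hb' : 1 / (c : ℚ) < 1 / 6 := by push_cast at h; linarith
    have hc7 : 7 ≤ c := ge7 c (by omega) hb'
    refine ⟨6, by decide, ?_⟩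
    rw [d6 c hc7]
  · by_cases hc3 : c = 3
    · subst hc3
      have hb' : 1 / (b : ℚ) < 1 / 6 := by push_cast at h; linarith
      have hb7 : 7 ≤ b := ge7 b (by omega) hb'
      refine ⟨6, by decide, ?_⟩
      rw [d6 b hb7]
    · have hb4 : 4 ≤ b := by omega
      have hc4 : 4 ≤ c := by omega
      refine ⟨4, by decide, ?_⟩
      rw [d4 b hb4, d4 c hc4]

lemma triple (a b c : ℕ) (ha : 2 ≤ a) (hb : 2 ≤ b) (hc : 2 ≤ c)
    (h : 1 / (a : ℚ) + 1 / (b : ℚ) + 1 / (c : ℚ) < 1) :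
    ∃ n ∈ ({3, 4, 6} : Finset ℕ),
      2 * n ≤ n * (a - 1) / a + n * (b - 1) / b + n * (c - 1) / c := by
  have pa : (0:ℚ) < a := by exact_mod_cast (by omega : 0 < a)
  have pb : (0:ℚ) < b := by exact_mod_cast (by omega : 0 < b)
  have pc : (0:ℚ) < c := by exact_mod_cast (by omega : 0 < c)
  have qa : (0:ℚ) < 1 / a := by positivity
  have qb : (0:ℚ) < 1 / b := by positivity
  have qc : (0:ℚ) < 1 / c := by positivity
  by_cases ha2 : a = 2
  · subst ha2
    have hb3 : 3 ≤ b := by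
      by_contra hb'
      have : b = 2 := by omega
      rw [this] at h
      push_cast at h
      linarith
    have hc3 : 3 ≤ c := by
      by_contra hc'
      have : c = 2 := by omega
      rw [this] at h
      push_cast at h
      linarith
    have h2 : 1 / (b : ℚ) + 1 / (c : ℚ) < 1 / 2 := by push_cast at h; linarith
    exact triple2 b c hb3 hc3 h2
  · have ha3 : 3 ≤ a := by omega
    by_cases hb2 : b = 2
    · subst hb2
      have hc3 : 3 ≤ c := by
        by_contra hc'
        have : c = 2 := by omega
        rw [this] at h
        push_cast at h
        linarith
      have h2 : 1 / (a : ℚ) + 1 / (c : ℚ) < 1 / 2 := by push_cast at h; linarith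
      obtain ⟨n, hn, hle⟩ := triple2 a c ha3 hc3 h2
      exact ⟨n, hn, by omega⟩
    · have hb3 : 3 ≤ b := by omega
      by_cases hc2 : c = 2
      · subst hc2
        have h2 : 1 / (a : ℚ) + 1 / (b : ℚ) < 1 / 2 := by push_cast at h; linarith
        obtain ⟨n, hn, hle⟩ := triple2 a b ha3 hb3 h2
        exact ⟨n, hn, by omega⟩
      · have hc3 : 3 ≤ c := by omega
        refine ⟨3, by decide, ?_⟩
        rw [d3 a ha3, d3 b hb3, d3 c hc3]

/-- Every signature `[g; k₁,…,k_r]` with negative orbifold Euler characteristic admits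
some `n ∈ {1, 2, 3, 4, 6}` with `ℓ_n ≥ 1`: every hyperbolic 2-orbifold admits a nonzero
holomorphic modular form of weight `2n` for some `n ∈ {1,2,3,4,6}`. -/
theorem nmin_mem_one_two_three_four_six (g r : ℕ) (k : Fin r → ℕ) (hk : ∀ i, 2 ≤ k i)
    (hχ : (2 : ℚ) - 2 * (g : ℚ) - ∑ i, ((k i : ℚ) - 1) / (k i : ℚ) < 0) :
    ∃ n ∈ ({1, 2, 3, 4, 6} : Finset ℕ), 1 ≤ ell g r k n := by
  by_cases h4 : 4 ≤ 3 * g + r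
  · refine ⟨2, by decide, ?_⟩
    have hsum : (∑ i, ⌊((2:ℕ) : ℚ) * ((k i : ℚ) - 1) / (k i : ℚ)⌋) = (r : ℤ) := by
      calc (∑ i, ⌊((2:ℕ) : ℚ) * ((k i : ℚ) - 1) / (k i : ℚ)⌋)
          = ∑ _i : Fin r, (1 : ℤ) := by
            refine Finset.sum_congr rfl fun i _ => ?_
            rw [F_eq 2 (k i) (by have := hk i; omega), d2 (k i) (hk i)]; rfl
        _ = (r : ℤ) := by simp
    have : ell g r k 2 = 3 * ((g : ℤ) - 1) + r := by
      unfold ell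
      push_cast at hsum ⊢
      rw [hsum]
      norm_num
    rw [this]; omega
  · push_neg at h4
    -- derive r + 2g ≥ 3
    have hge : 3 ≤ r + 2 * g := by
      rcases Nat.eq_zero_or_pos r with hr0 | hrpos
      · subst hr0
        simp at hχ
        have h1 : (1 : ℚ) < g := by linarith
        have : 1 < g := by exact_mod_cast h1
        omega
      · have hb : ∀ i ∈ (Finset.univ : Finset (Fin r)),
            ((k i : ℚ) - 1) / (k i : ℚ) < 1 := by
          intro i _
          have h2 := hk i
          have : (0:ℚ) < k i := by exact_mod_cast (by omega : 0 < k i)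
          rw [div_lt_one this]; linarith
        have hne : (Finset.univ : Finset (Fin r)).Nonempty := by
          simpa [Finset.univ_nonempty_iff] using Fin.pos_iff_nonempty.mp hrpos
        have hlt : (∑ i, ((k i : ℚ) - 1) / (k i : ℚ)) < ∑ _i : Fin r, (1:ℚ) :=
          Finset.sum_lt_sum_of_nonempty hne hb
        simp at hlt
        have : (2 : ℚ) < r + 2 * g := by linarith
        have : 2 < r + 2 * g := by exact_mod_cast this
        omega
    have hg0 : g = 0 := by omega
    have hr3 : r = 3 := by omega
    subst hg0; subst hr3
    rw [Fin.sum_univ_three] at hχ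
    set a := k 0 with hadef
    set b := k 1 with hbdef
    set c := k 2 with hcdef
    have ha := hk 0; have hb := hk 1; have hc := hk 2
    have pa : (0:ℚ) < a := by exact_mod_cast (by omega : 0 < a)
    have pb : (0:ℚ) < b := by exact_mod_cast (by omega : 0 < b)
    have pc : (0:ℚ) < c := by exact_mod_cast (by omega : 0 < c)
    have e1 : ((a:ℚ) - 1) / a = 1 - 1 / a := by field_simp
    have e2 : ((b:ℚ) - 1) / b = 1 - 1 / b := by field_simp
    have e3 : ((c:ℚ) - 1) / c = 1 - 1 / c := by field_simp
    rw [e1, e2, e3] at hχ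
    have hq : 1 / (a : ℚ) + 1 / (b : ℚ) + 1 / (c : ℚ) < 1 := by linarith
    obtain ⟨n, hn, hle⟩ := triple a b c ha hb hc hq
    have hn1 : n ≠ 1 := by fin_cases hn <;> decide
    refine ⟨n, by fin_cases hn <;> decide, ?_⟩
    have : ell 0 3 k n =
        (2 * (n : ℤ) - 1) * (-1) +
          ((n * (a - 1) / a : ℕ) + (n * (b - 1) / b : ℕ) + (n * (c - 1) / c : ℕ)) := by
      unfold ell
      rw [Fin.sum_univ_three,
        F_eq n a (by omega), F_eq n b (by omega), F_eq n c (by omega)]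
      simp [hn1]
    rw [this]
    have h3 : 3 ≤ n := by fin_cases hn <;> omega
    set x := n * (a - 1) / a
    set y := n * (b - 1) / b
    set z := n * (c - 1) / c
    omega
end

section
/- Let P be a polynomial with real coefficients, let n be an integer with n ≥ deg P, and write P = Σ_{i=0}^n p_i Xⁱ. Define the polynomial Q = Σ_{i=0}^n p_i Xⁱ(1−X)^{n−i} (so that Q(y) = (1−y)ⁿ P(y/(1−y)) for y ≠ 1). Then P(x) ≥ 0 for all real x ≥ 0 if and only if Q(y) ≥ 0 for all y ∈ [0,1]. -/
open Polynomial

lemma Qeval_aux (P : Polynomial ℝ) (n : ℕ) (hn : P.natDegree ≤ n) (Q : Polynomial ℝ)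
    (hQ : Q = ∑ i ∈ Finset.range (n + 1),
      Polynomial.C (P.coeff i) * Polynomial.X ^ i * (1 - Polynomial.X) ^ (n - i))
    (t : ℝ) (ht : (1 : ℝ) - t ≠ 0) :
    Q.eval t = (1 - t) ^ n * P.eval (t / (1 - t)) := by
  rw [hQ, Polynomial.eval_finset_sum,
    Polynomial.eval_eq_sum_range' (Nat.lt_succ_of_le hn), Finset.mul_sum]
  apply Finset.sum_congr rfl
  intro i hi
  rw [Finset.mem_range, Nat.lt_succ_iff] at hi
  simp only [eval_mul, eval_pow, eval_C, eval_X, eval_sub, eval_one]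
  rw [div_pow, pow_sub₀ _ ht hi]
  field_simp

/-- Let `P` be a real polynomial, `n ≥ deg P`, and let
`Q = Σ_{i=0}^n p_i Xⁱ(1−X)^{n−i}` (so `Q(y) = (1−y)ⁿ P(y/(1−y))` for `y ≠ 1`).
Then `P(x) ≥ 0` for all `x ≥ 0` if and only if `Q(y) ≥ 0` for all `y ∈ [0,1]`. -/
theorem nonneg_on_halfline_iff_nonneg_on_unit_interval (P : Polynomial ℝ) (n : ℕ)
    (hn : P.natDegree ≤ n) (Q : Polynomial ℝ)
    (hQ : Q = ∑ i ∈ Finset.range (n + 1),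
      Polynomial.C (P.coeff i) * Polynomial.X ^ i * (1 - Polynomial.X) ^ (n - i)) :
    (∀ x : ℝ, 0 ≤ x → 0 ≤ P.eval x) ↔ (∀ y ∈ Set.Icc (0 : ℝ) 1, 0 ≤ Q.eval y) := by
  have key : ∀ t : ℝ, 0 ≤ t → t < 1 → (∀ x : ℝ, 0 ≤ x → 0 ≤ P.eval x) → 0 ≤ Q.eval t := by
    intro t ht0 ht1 hP
    have ht : (1 : ℝ) - t ≠ 0 := by intro h; linarith [sub_eq_zero.mp h]
    rw [Qeval_aux P n hn Q hQ t ht]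
    exact mul_nonneg (pow_nonneg (by linarith) n)
      (hP _ (div_nonneg ht0 (by linarith)))
  constructor
  · intro hP y hy
    obtain ⟨hy0, hy1⟩ := hy
    rcases lt_or_eq_of_le hy1 with h1 | h1
    · exact key y hy0 h1 hP
    · subst h1
      have hc : ContinuousWithinAt (fun t => Q.eval t) (Set.Ico (0:ℝ) 1) 1 :=
        (Polynomial.continuous Q).continuousWithinAt
      have hne : (nhdsWithin (1:ℝ) (Set.Ico (0:ℝ) 1)).NeBot := by
        rw [← mem_closure_iff_nhdsWithin_neBot, closure_Ico (by norm_num : (0:ℝ) ≠ 1)]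
        exact ⟨by norm_num, le_refl 1⟩
      refine ge_of_tendsto hc ?_
      filter_upwards [self_mem_nhdsWithin] with t ht
      exact key t ht.1 ht.2 hP
  · intro hQpos x hx
    have h1x : (0:ℝ) < 1 + x := by linarith
    set y := x / (1 + x) with hy
    have hy0 : 0 ≤ y := div_nonneg hx h1x.le
    have hy1 : y < 1 := by rw [hy, div_lt_one h1x]; linarith
    have h1y : 1 - y = 1 / (1 + x) := by rw [hy]; field_simp; ring
    have ht : (1 : ℝ) - y ≠ 0 := by rw [h1y]; positivity
    have hxy : y / (1 - y) = x := by rw [h1y, hy]; field_simp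
    have hk := Qeval_aux P n hn Q hQ y ht
    rw [hxy] at hk
    have hQy := hQpos y ⟨hy0, hy1.le⟩
    rw [hk, h1y] at hQy
    have hp : (0:ℝ) < (1 / (1 + x)) ^ n := by positivity
    nlinarith [hQy, hp]
end

section
/- Let Q be a polynomial with real coefficients, let n be an integer with n ≥ deg Q, write Q = Σ_{i=0}^n q_i Xⁱ, and let a < b be real numbers. Define the polynomial R = Σ_{i=0}^n q_i (bX+a)ⁱ(X+1)^{n−i} (so that R(x) = (x+1)ⁿ Q((bx+a)/(x+1)) for x ≠ −1). Then Q(y) ≥ 0 for all y ∈ [a,b] if and only if R(x) ≥ 0 for all real x ≥ 0. -/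
open Polynomial

lemma key_eval (Q : Polynomial ℝ) (n : ℕ) (hn : Q.natDegree ≤ n) (a b x : ℝ)
    (hx : x + 1 ≠ 0) :
    (∑ i ∈ Finset.range (n + 1),
      Polynomial.C (Q.coeff i) * (Polynomial.C b * Polynomial.X + Polynomial.C a) ^ i *
        (Polynomial.X + 1) ^ (n - i)).eval x
      = (x + 1) ^ n * Q.eval ((b * x + a) / (x + 1)) := by
  rw [Polynomial.eval_finset_sum,
    Polynomial.eval_eq_sum_range' (lt_of_le_of_lt hn (Nat.lt_succ_self n)), Finset.mul_sum]
  apply Finset.sum_congr rfl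
  intro i hi
  rw [Finset.mem_range] at hi
  have hpow : (x + 1) ^ n = (x + 1) ^ (n - i) * (x + 1) ^ i := by
    rw [← pow_add, Nat.sub_add_cancel (by omega)]
  simp only [Polynomial.eval_mul, Polynomial.eval_pow, Polynomial.eval_add, Polynomial.eval_C,
    Polynomial.eval_X, Polynomial.eval_one, div_pow, hpow]
  field_simp

/-- Let `Q` be a real polynomial, `n ≥ deg Q`, `a < b`, and let
`R = Σ_{i=0}^n q_i (bX+a)ⁱ(X+1)^{n−i}` (so `R(x) = (x+1)ⁿ Q((bx+a)/(x+1))` for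
`x ≠ −1`). Then `Q(y) ≥ 0` for all `y ∈ [a,b]` iff `R(x) ≥ 0` for all `x ≥ 0`. -/
theorem nonneg_on_interval_iff_nonneg_on_halfline (Q : Polynomial ℝ) (n : ℕ)
    (hn : Q.natDegree ≤ n) (a b : ℝ) (hab : a < b) (R : Polynomial ℝ)
    (hR : R = ∑ i ∈ Finset.range (n + 1),
      Polynomial.C (Q.coeff i) * (Polynomial.C b * Polynomial.X + Polynomial.C a) ^ i *
        (Polynomial.X + 1) ^ (n - i)) :
    (∀ y ∈ Set.Icc a b, 0 ≤ Q.eval y) ↔ (∀ x : ℝ, 0 ≤ x → 0 ≤ R.eval x) := by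
  constructor
  · intro h x hx
    have hx1 : (0:ℝ) < x + 1 := by linarith
    rw [hR, key_eval Q n hn a b x hx1.ne']
    have hy : (b * x + a) / (x + 1) ∈ Set.Icc a b := by
      constructor
      · rw [le_div_iff₀ hx1]; nlinarith
      · rw [div_le_iff₀ hx1]; nlinarith
    exact mul_nonneg (pow_nonneg hx1.le n) (h _ hy)
  · intro h y hy
    -- first establish nonnegativity on [a, b)
    have hlt : ∀ z ∈ Set.Ico a b, 0 ≤ Q.eval z := by
      intro z hz
      obtain ⟨hza, hzb⟩ := hz
      set x : ℝ := (z - a) / (b - z) with hxdef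
      have hbz : (0:ℝ) < b - z := by linarith
      have hx0 : 0 ≤ x := div_nonneg (by linarith) hbz.le
      have hx1 : (0:ℝ) < x + 1 := by linarith
      have hmap : (b * x + a) / (x + 1) = z := by
        have hba : b - a ≠ 0 := by linarith
        rw [hxdef]
        field_simp
        ring
      have := h x hx0
      rw [hR, key_eval Q n hn a b x hx1.ne', hmap] at this
      exact nonneg_of_mul_nonneg_right this (pow_pos hx1 n)
    rcases eq_or_lt_of_le hy.2 with hb | hb
    · -- y = b : continuity argument
      subst hb
      have htend : Filter.Tendsto (fun z => Q.eval z) (nhdsWithin y (Set.Iio y))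
          (nhds (Q.eval y)) :=
        Q.continuous.continuousWithinAt
      have hev : ∀ᶠ z in nhdsWithin y (Set.Iio y), 0 ≤ Q.eval z := by
        filter_upwards [Ioo_mem_nhdsLT_of_mem (Set.mem_Ioc.mpr ⟨hab, le_refl y⟩)] with z hz
        exact hlt z ⟨hz.1.le, hz.2⟩
      exact ge_of_tendsto htend hev
    · exact hlt y ⟨hy.1, hb⟩
end

section
/- Let s be a real number with 0 < s < 1/2 and let m ≥ 0 be an integer. Then the integrals below are finite and ∫₀^{2π} cos(mθ)·|1−e^{iθ}|^{2s−1} dθ = ((1/2−s)_m / (1/2+s)_m) · ∫₀^{2π} |1−e^{iθ}|^{2s−1} dθ. (This is the Fourier diagonalization of the complementary series norm: with Δ = 1/2+s, the quadratic form ∫∫ |dz||dw| conj(f(z)) f(w) / |z−w|^{2−2Δ} on the unit circle equals C·Σ_m ((1/2−s)_{|m|}/(1/2+s)_{|m|}) |f_m|² in terms of the Fourier coefficients f_m of f.) -/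
open Real MeasureTheory

lemma abs_one_sub_exp (θ : ℝ) :
    ‖1 - Complex.exp (Complex.I * (θ : ℂ))‖ = 2 * |Real.sin (θ / 2)| := by
  rw [mul_comm, Complex.exp_mul_I]
  rw [show (1 : ℂ) - (Complex.cos θ + Complex.sin θ * Complex.I)
      = Complex.mk (1 - Real.cos θ) (-Real.sin θ) by
    apply Complex.ext <;> simp [Complex.cos_ofReal_re, Complex.sin_ofReal_re]]
  rw [Complex.norm_def, Complex.normSq_mk]
  have hcos := Real.cos_two_mul (θ / 2)
  rw [show 2 * (θ / 2) = θ by ring] at hcos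
  have h2 := Real.sin_sq_add_cos_sq (θ / 2)
  have h4 := Real.sin_sq_add_cos_sq θ
  have h3 : |Real.sin (θ / 2)| ^ 2 = Real.sin (θ / 2) ^ 2 := sq_abs _
  have h : (1 - Real.cos θ) * (1 - Real.cos θ) + (-Real.sin θ) * (-Real.sin θ)
      = (2 * |Real.sin (θ / 2)|) ^ 2 := by nlinarith [h2, h3, h4, hcos]
  rw [h, Real.sqrt_sq_eq_abs, abs_of_nonneg (by positivity)]


lemma sin_lower (θ : ℝ) (h0 : 0 < θ) (h2 : θ < 2 * π) :
    2 / π * min θ (2 * π - θ) ≤ 2 * |Real.sin (θ / 2)| := by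
  have hπ := Real.pi_pos
  have hsin : 0 ≤ Real.sin (θ / 2) :=
    Real.sin_nonneg_of_nonneg_of_le_pi (by linarith) (by linarith)
  rw [abs_of_nonneg hsin]
  rcases le_total θ (2 * π - θ) with h | h
  · rw [min_eq_left h]
    have := Real.mul_le_sin (x := θ / 2) (by linarith) (by linarith)
    linarith
  · rw [min_eq_right h]
    have hs2 : Real.sin (θ / 2) = Real.sin (π - θ / 2) := (Real.sin_pi_sub _).symm
    have := Real.mul_le_sin (x := π - θ / 2) (by linarith) (by linarith)
    rw [← hs2] at this
    have : 2 / π * (π - θ / 2) ≤ Real.sin (θ / 2) := this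
    calc 2 / π * (2 * π - θ) = 2 * (2 / π * (π - θ / 2)) := by ring
    _ ≤ 2 * Real.sin (θ / 2) := by linarith

lemma w_integrable (s : ℝ) (hs0 : 0 < s) (hs : s < 1 / 2) :
    IntervalIntegrable (fun θ : ℝ => (2 * |Real.sin (θ / 2)|) ^ (2 * s - 1)) volume 0 (2 * π) := by
  have hπ := Real.pi_pos
  have he1 : (-1 : ℝ) < 2 * s - 1 := by linarith
  have he0 : 2 * s - 1 ≤ 0 := by linarith
  have hG1 : IntervalIntegrable (fun θ : ℝ => θ ^ (2 * s - 1)) volume 0 (2 * π) :=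
    intervalIntegral.intervalIntegrable_rpow' he1
  have hG2 : IntervalIntegrable (fun θ : ℝ => (2 * π - θ) ^ (2 * s - 1)) volume 0 (2 * π) := by
    have := (intervalIntegral.intervalIntegrable_rpow' (a := 0) (b := 2 * π) he1).comp_sub_left
      (2 * π)
    simpa using this.symm
  have hG : IntervalIntegrable
      (fun θ : ℝ => (2 / π) ^ (2 * s - 1) * (θ ^ (2 * s - 1) + (2 * π - θ) ^ (2 * s - 1)))
      volume 0 (2 * π) := ((hG1.add hG2).const_mul _)
  refine hG.mono_fun' ?_ ?_
  · apply Measurable.aestronglyMeasurable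
    fun_prop
  · rw [Set.uIoc_of_le (by positivity)]
    refine (ae_restrict_iff' measurableSet_Ioc).2 (Filter.Eventually.of_forall fun θ hθ => ?_)
    obtain ⟨h0, h2π⟩ := hθ
    have hb0 : (0 : ℝ) ≤ 2 * |Real.sin (θ / 2)| := by positivity
    simp only []
    rw [Real.norm_eq_abs, abs_of_nonneg (Real.rpow_nonneg hb0 _)]
    rcases eq_or_lt_of_le h2π with rfl | hlt
    · rw [show (2 * π) / 2 = π by ring, Real.sin_pi]
      simp only [abs_zero, mul_zero]
      rw [Real.zero_rpow (by linarith)]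
      have : (0:ℝ) ≤ (2*π) ^ (2*s-1) := Real.rpow_nonneg (by positivity) _
      have h2 : (2*π - 2*π) ^ (2*s-1) = 0 := by
        rw [sub_self, Real.zero_rpow (by linarith)]
      positivity
    · have hmin : 0 < min θ (2 * π - θ) := lt_min h0 (by linarith)
      have key := sin_lower θ h0 hlt
      have h1 : (2 * |Real.sin (θ / 2)|) ^ (2 * s - 1)
          ≤ (2 / π * min θ (2 * π - θ)) ^ (2 * s - 1) :=
        Real.rpow_le_rpow_of_nonpos (by positivity) key he0
      have h2 : (2 / π * min θ (2 * π - θ)) ^ (2 * s - 1)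
          = (2 / π) ^ (2 * s - 1) * (min θ (2 * π - θ)) ^ (2 * s - 1) :=
        Real.mul_rpow (by positivity) hmin.le
      have h3 : (min θ (2 * π - θ)) ^ (2 * s - 1)
          ≤ θ ^ (2 * s - 1) + (2 * π - θ) ^ (2 * s - 1) := by
        rcases le_total θ (2 * π - θ) with h | h
        · rw [min_eq_left h]
          exact le_add_of_nonneg_right (Real.rpow_nonneg (by linarith) _)
        · rw [min_eq_right h]
          exact le_add_of_nonneg_left (Real.rpow_nonneg h0.le _)
      have hc : (0:ℝ) ≤ (2 / π) ^ (2 * s - 1) := Real.rpow_nonneg (by positivity) _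
      calc (2 * |Real.sin (θ / 2)|) ^ (2 * s - 1)
          ≤ (2 / π) ^ (2 * s - 1) * (min θ (2 * π - θ)) ^ (2 * s - 1) := by rw [← h2]; exact h1
        _ ≤ (2 / π) ^ (2 * s - 1) * (θ ^ (2 * s - 1) + (2 * π - θ) ^ (2 * s - 1)) := by
            exact mul_le_mul_of_nonneg_left h3 hc


variable {s : ℝ}

lemma cosw_integrable (hs0 : 0 < s) (hs : s < 1 / 2) (c : ℝ)
    (hw : IntervalIntegrable (fun θ : ℝ => (2 * |Real.sin (θ / 2)|) ^ (2 * s - 1))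
      volume 0 (2 * π)) :
    IntervalIntegrable (fun θ : ℝ => Real.cos (c * θ) * (2 * |Real.sin (θ / 2)|) ^ (2 * s - 1))
      volume 0 (2 * π) := by
  refine hw.mono_fun (Measurable.aestronglyMeasurable (by fun_prop)) ?_
  refine Filter.Eventually.of_forall fun θ => ?_
  simp only [Real.norm_eq_abs, abs_mul]
  have h1 : |Real.cos (c * θ)| ≤ 1 := Real.abs_cos_le_one _
  have h2 : (0:ℝ) ≤ |(2 * |Real.sin (θ / 2)|) ^ (2 * s - 1)| := abs_nonneg _
  nlinarith

lemma recursion (hs0 : 0 < s) (hs : s < 1 / 2) (m : ℕ)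
    (hw : IntervalIntegrable (fun θ : ℝ => (2 * |Real.sin (θ / 2)|) ^ (2 * s - 1))
      volume 0 (2 * π)) :
    ((m : ℝ) + 1 / 2 + s) *
        (∫ θ in (0:ℝ)..(2 * π), Real.cos (((m : ℝ) + 1) * θ) * (2 * |Real.sin (θ / 2)|) ^ (2 * s - 1))
      = ((m : ℝ) + 1 / 2 - s) *
        (∫ θ in (0:ℝ)..(2 * π), Real.cos ((m : ℝ) * θ) * (2 * |Real.sin (θ / 2)|) ^ (2 * s - 1)) := by
  have hπ := Real.pi_pos
  set w : ℝ → ℝ := fun θ => (2 * |Real.sin (θ / 2)|) ^ (2 * s - 1) with hwdef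
  set g : ℝ → ℝ := fun θ => Real.cos (((m : ℝ) + 1 / 2) * θ) * (2 * |Real.sin (θ / 2)|) ^ (2 * s)
    with hgdef
  set F : ℝ → ℝ := fun θ => ((m : ℝ) + 1 / 2 + s) * (Real.cos (((m : ℝ) + 1) * θ) * w θ)
      - ((m : ℝ) + 1 / 2 - s) * (Real.cos ((m : ℝ) * θ) * w θ) with hFdef
  have hint1 := cosw_integrable hs0 hs ((m : ℝ) + 1) hw
  have hint0 := cosw_integrable hs0 hs (m : ℝ) hw
  have hFint : IntervalIntegrable F volume 0 (2 * π) :=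
    (hint1.const_mul _).sub (hint0.const_mul _)
  have hcont : ContinuousOn g (Set.Icc 0 (2 * π)) := by
    apply Continuous.continuousOn
    exact (Real.continuous_cos.comp (continuous_const.mul continuous_id)).mul
      ((Real.continuous_rpow_const (by linarith)).comp
        (continuous_const.mul ((continuous_abs.comp
          (Real.continuous_sin.comp (continuous_id.div_const 2))))))
  have hderiv : ∀ θ ∈ Set.Ioo (0:ℝ) (2 * π), HasDerivAt g (F θ) θ := by
    intro θ hθ
    obtain ⟨h0, h2π⟩ := hθ
    have hsinpos : 0 < Real.sin (θ / 2) :=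
      Real.sin_pos_of_pos_of_lt_pi (by linarith) (by linarith)
    -- the non-abs version
    have hg2 : g =ᶠ[nhds θ] fun x =>
        Real.cos (((m : ℝ) + 1 / 2) * x) * (2 * Real.sin (x / 2)) ^ (2 * s) := by
      have hopen : IsOpen (Set.Ioo (0:ℝ) (2 * π)) := isOpen_Ioo
      filter_upwards [hopen.mem_nhds ⟨h0, h2π⟩] with x hx
      have : 0 < Real.sin (x / 2) :=
        Real.sin_pos_of_pos_of_lt_pi (by linarith [hx.1]) (by linarith [hx.2])
      rw [hgdef]
      simp only [abs_of_pos this]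
    have hu : HasDerivAt (fun x : ℝ => 2 * Real.sin (x / 2)) (Real.cos (θ / 2)) θ := by
      have : HasDerivAt (fun x : ℝ => x / 2) (1 / 2) θ := (hasDerivAt_id θ).div_const 2
      have h2 := (Real.hasDerivAt_sin (θ / 2)).comp θ this
      have := h2.const_mul 2
      refine this.congr_deriv ?_
      ring
    have hbne : 2 * Real.sin (θ / 2) ≠ 0 := by positivity
    have hrp : HasDerivAt (fun x : ℝ => (2 * Real.sin (x / 2)) ^ (2 * s))
        (Real.cos (θ / 2) * (2 * s) * (2 * Real.sin (θ / 2)) ^ (2 * s - 1)) θ :=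
      hu.rpow_const (Or.inl hbne)
    have hc : HasDerivAt (fun x : ℝ => Real.cos (((m : ℝ) + 1 / 2) * x))
        (-Real.sin (((m : ℝ) + 1 / 2) * θ) * ((m : ℝ) + 1 / 2)) θ := by
      have : HasDerivAt (fun x : ℝ => ((m : ℝ) + 1 / 2) * x) ((m : ℝ) + 1 / 2) θ := by
        simpa using (hasDerivAt_id θ).const_mul ((m : ℝ) + 1 / 2)
      exact this.cos
    have hmul := hc.mul hrp
    refine HasDerivAt.congr_of_eventuallyEq ?_ hg2
    refine hmul.congr_deriv ?_
    -- identity for the derivative value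
    have hW : w θ = (2 * Real.sin (θ / 2)) ^ (2 * s - 1) := by
      rw [hwdef]; simp only [abs_of_pos hsinpos]
    have hA : (2 * Real.sin (θ / 2)) ^ (2 * s)
        = (2 * Real.sin (θ / 2)) ^ (2 * s - 1) * (2 * Real.sin (θ / 2)) := by
      rw [← Real.rpow_add_one hbne]; norm_num
    have e1 : ((m : ℝ) + 1) * θ = ((m : ℝ) + 1 / 2) * θ + θ / 2 := by ring
    have e0 : (m : ℝ) * θ = ((m : ℝ) + 1 / 2) * θ - θ / 2 := by ring
    rw [hFdef]
    simp only [e1, e0, Real.cos_add, Real.cos_sub, hW, hA]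
    ring
  have hftc := intervalIntegral.integral_eq_sub_of_hasDerivAt_of_le (by linarith) hcont hderiv hFint
  have hg0 : g 0 = 0 := by
    rw [hgdef]
    simp only [mul_zero, Real.cos_zero, zero_div, Real.sin_zero, abs_zero, one_mul]
    rw [Real.zero_rpow (by linarith)]
  have hg2π : g (2 * π) = 0 := by
    rw [hgdef]
    simp only [show (2 * π) / 2 = π by ring, Real.sin_pi, abs_zero, mul_zero]
    rw [Real.zero_rpow (by linarith), mul_zero]
  rw [hg0, hg2π, sub_zero] at hftc
  have hsplit : (∫ θ in (0:ℝ)..(2*π), F θ)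
      = ((m : ℝ) + 1 / 2 + s) * (∫ θ in (0:ℝ)..(2*π), Real.cos (((m : ℝ) + 1) * θ) * w θ)
        - ((m : ℝ) + 1 / 2 - s) * (∫ θ in (0:ℝ)..(2*π), Real.cos ((m : ℝ) * θ) * w θ) := by
    rw [hFdef]
    rw [intervalIntegral.integral_sub (hint1.const_mul _) (hint0.const_mul _)]
    rw [intervalIntegral.integral_const_mul, intervalIntegral.integral_const_mul]
  rw [hftc] at hsplit
  linarith [hsplit]

lemma main_w (hs0 : 0 < s) (hs : s < 1 / 2) (m : ℕ)
    (hw : IntervalIntegrable (fun θ : ℝ => (2 * |Real.sin (θ / 2)|) ^ (2 * s - 1))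
      volume 0 (2 * π)) :
    (∫ θ in (0:ℝ)..(2 * π), Real.cos ((m : ℝ) * θ) * (2 * |Real.sin (θ / 2)|) ^ (2 * s - 1))
      = ((ascPochhammer ℝ m).eval (1 / 2 - s) / (ascPochhammer ℝ m).eval (1 / 2 + s)) *
        ∫ θ in (0:ℝ)..(2 * π), (2 * |Real.sin (θ / 2)|) ^ (2 * s - 1) := by
  induction m with
  | zero =>
    simp [Real.cos_zero]
  | succ m ih =>
    have hrec := recursion hs0 hs m hw
    have hc1 : (0:ℝ) < (m : ℝ) + 1 / 2 + s := by positivity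
    have hP : (0:ℝ) < (ascPochhammer ℝ m).eval (1 / 2 + s) :=
      ascPochhammer_pos m _ (by linarith)
    have hP' : (0:ℝ) < (ascPochhammer ℝ (m + 1)).eval (1 / 2 + s) :=
      ascPochhammer_pos (m + 1) _ (by linarith)
    have hsucc1 : (ascPochhammer ℝ (m + 1)).eval (1 / 2 - s)
        = (ascPochhammer ℝ m).eval (1 / 2 - s) * (1 / 2 - s + m) := ascPochhammer_succ_eval m _
    have hsucc2 : (ascPochhammer ℝ (m + 1)).eval (1 / 2 + s)
        = (ascPochhammer ℝ m).eval (1 / 2 + s) * (1 / 2 + s + m) := ascPochhammer_succ_eval m _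
    have hcast : ((m + 1 : ℕ) : ℝ) = (m : ℝ) + 1 := by push_cast; ring
    rw [hcast, hsucc1, hsucc2]
    rw [ih] at hrec
    set A := Polynomial.eval (1 / 2 - s) (ascPochhammer ℝ m) with hA
    set B := Polynomial.eval (1 / 2 + s) (ascPochhammer ℝ m) with hB
    have hBne : B ≠ 0 := hP.ne'
    have hcne : (1 / 2 + s + (m : ℝ)) ≠ 0 := by positivity
    have hrec2 : (((m : ℝ) + 1 / 2 + s) *
        (∫ θ in (0:ℝ)..(2 * π), Real.cos (((m:ℝ) + 1) * θ) * (2 * |Real.sin (θ / 2)|) ^ (2 * s - 1))) * B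
        = (((m : ℝ) + 1 / 2 - s) * A) *
          (∫ θ in (0:ℝ)..(2 * π), (2 * |Real.sin (θ / 2)|) ^ (2 * s - 1)) := by
      rw [← eq_div_iff hBne, hrec]
      ring
    rw [div_mul_eq_mul_div, eq_div_iff (by positivity)]
    linear_combination hrec2

/-- Fourier diagonalization of the complementary series norm: for `0 < s < 1/2` and
`m ≥ 0`, the integrals below are finite and
`∫₀^{2π} cos(mθ)·|1−e^{iθ}|^{2s−1} dθ
  = ((1/2−s)_m / (1/2+s)_m) · ∫₀^{2π} |1−e^{iθ}|^{2s−1} dθ`. -/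
theorem complementary_series_fourier (s : ℝ) (hs0 : 0 < s) (hs : s < 1 / 2) (m : ℕ) :
    IntervalIntegrable
      (fun θ : ℝ => ‖1 - Complex.exp (Complex.I * (θ : ℂ))‖ ^ (2 * s - 1))
      volume 0 (2 * π) ∧
    IntervalIntegrable
      (fun θ : ℝ => Real.cos (m * θ) *
        ‖1 - Complex.exp (Complex.I * (θ : ℂ))‖ ^ (2 * s - 1))
      volume 0 (2 * π) ∧
    (∫ θ in (0 : ℝ)..(2 * π), Real.cos (m * θ) *
        ‖1 - Complex.exp (Complex.I * (θ : ℂ))‖ ^ (2 * s - 1)) =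
      ((ascPochhammer ℝ m).eval (1 / 2 - s) / (ascPochhammer ℝ m).eval (1 / 2 + s)) *
        ∫ θ in (0 : ℝ)..(2 * π),
          ‖1 - Complex.exp (Complex.I * (θ : ℂ))‖ ^ (2 * s - 1) := by
  have hw := w_integrable s hs0 hs
  simp only [abs_one_sub_exp]
  exact ⟨hw, cosw_integrable hs0 hs m hw, main_w hs0 hs m hw⟩
end
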